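/- arXiv:1109.4659 — 7 statements merged into one kernel-verified Lean document; each statement's English description precedes it below -/
import Mathlib

section
/- Let N ≥ 1 and n, m ≥ 0 be integers and λ₁, λ₂, λ > 0 real. Define F(t;s) = S_N(λ₁,λ₂,λ;t;s), the deformed Selberg integral, for t ∈ ℂⁿ and s ∈ (ℂ∖[1,∞))^m. Then F satisfies the cancellation condition: for all 1 ≤ i ≤ n and 1 ≤ j ≤ m, at every point with t_i = s_j ∈ ℂ∖[1,∞), one has ∂F/∂t_i + (1/λ)∂F/∂s_j = 0. -/
open MeasureTheory Finset

/-- Partial derivative of `F(t,s)` in the variable `t i`. -/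
noncomputable def pdT {n m : ℕ} (F : (Fin n → ℂ) → (Fin m → ℂ) → ℂ) (i : Fin n)
    (t : Fin n → ℂ) (s : Fin m → ℂ) : ℂ :=
  deriv (fun z => F (Function.update t i z) s) (t i)

/-- Partial derivative of `F(t,s)` in the variable `s j`. -/
noncomputable def pdS {n m : ℕ} (F : (Fin n → ℂ) → (Fin m → ℂ) → ℂ) (j : Fin m)
    (t : Fin n → ℂ) (s : Fin m → ℂ) : ℂ :=
  deriv (fun z => F t (Function.update s j z)) (s j)

/-- The slit complex plane `ℂ ∖ [1,∞)`. -/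
def slitOne : Set ℂ := {z : ℂ | z.im ≠ 0 ∨ z.re < 1}

/-- The Selberg density `∏ xᵢ^{λ₁}(1-xᵢ)^{λ₂} ∏_{j<k} |xⱼ-xₖ|^{2λ}` on `[0,1]^N`. -/
noncomputable def selbergDensity (N : ℕ) (l1 l2 l : ℝ) (x : Fin N → ℝ) : ℝ :=
  (∏ i, (x i) ^ l1 * (1 - x i) ^ l2) *
    ∏ j : Fin N, ∏ k ∈ univ.filter (fun k => j < k), |x j - x k| ^ (2 * l)

/-- The cube `[0,1]^N`. -/
def unitCube (N : ℕ) : Set (Fin N → ℝ) := Set.univ.pi fun _ => Set.Icc (0:ℝ) 1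

/-- The deformed Selberg integral
`S_N(λ₁,λ₂,λ;t;s) = ∫_{[0,1]^N} D(x) ∏_j ∏_k (1-xⱼtₖ) ∏_ℓ (1-xⱼs_ℓ)^{-λ} dx`,
with principal branch powers. -/
noncomputable def deformedSelberg (N n m : ℕ) (l1 l2 l : ℝ)
    (t : Fin n → ℂ) (s : Fin m → ℂ) : ℂ :=
  ∫ x in unitCube N,
    ((selbergDensity N l1 l2 l x : ℝ) : ℂ) *
      ∏ j : Fin N, ((∏ k, (1 - (x j : ℂ) * t k)) *
        ∏ k, (1 - (x j : ℂ) * s k) ^ (-(l : ℂ)))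






lemma continuous_selbergDensity (N : ℕ) {l1 l2 l : ℝ}
    (h1 : 0 ≤ l1) (h2 : 0 ≤ l2) (h : 0 ≤ l) :
    Continuous (selbergDensity N l1 l2 l) := by
  unfold selbergDensity
  apply Continuous.mul
  · exact continuous_finset_prod _ fun a _ =>
      ((Real.continuous_rpow_const h1).comp (continuous_apply a)).mul
        ((Real.continuous_rpow_const h2).comp (continuous_const.sub (continuous_apply a)))
  · exact continuous_finset_prod _ fun a _ => continuous_finset_prod _ fun b _ =>
      (Real.continuous_rpow_const (by positivity)).comp
        ((continuous_apply a).sub (continuous_apply b)).abs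

section aux

variable {N n m : ℕ} (l1 l2 l : ℝ) (t : Fin n → ℂ) (s : Fin m → ℂ)

noncomputable def AA (i : Fin n) (x : Fin N → ℝ) (j' : Fin N) : ℂ :=
  (∏ k ∈ univ.erase i, (1 - (x j' : ℂ) * t k)) * ∏ k, (1 - (x j' : ℂ) * s k) ^ (-(l : ℂ))

noncomputable def TT (x : Fin N → ℝ) (j' : Fin N) : ℂ := ∏ k, (1 - (x j' : ℂ) * t k)

noncomputable def BB (j : Fin m) (x : Fin N → ℝ) (j' : Fin N) : ℂ :=
  ∏ k ∈ univ.erase j, (1 - (x j' : ℂ) * s k) ^ (-(l : ℂ))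

noncomputable def Gt (i : Fin n) (z : ℂ) (x : Fin N → ℝ) : ℂ :=
  ((selbergDensity N l1 l2 l x : ℝ) : ℂ) * ∏ j', ((1 - (x j' : ℂ) * z) * AA l t s i x j')

noncomputable def Gt' (i : Fin n) (z : ℂ) (x : Fin N → ℝ) : ℂ :=
  ((selbergDensity N l1 l2 l x : ℝ) : ℂ) *
    ∑ j', (∏ j'' ∈ univ.erase j', ((1 - (x j'' : ℂ) * z) * AA l t s i x j'')) *
      (-(x j' : ℂ) * AA l t s i x j')

noncomputable def Gs (j : Fin m) (z : ℂ) (x : Fin N → ℝ) : ℂ :=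
  ((selbergDensity N l1 l2 l x : ℝ) : ℂ) *
    ∏ j', (TT t x j' * ((1 - (x j' : ℂ) * z) ^ (-(l : ℂ)) * BB l s j x j'))

noncomputable def Gs' (j : Fin m) (z : ℂ) (x : Fin N → ℝ) : ℂ :=
  ((selbergDensity N l1 l2 l x : ℝ) : ℂ) *
    ∑ j', (∏ j'' ∈ univ.erase j',
        (TT t x j'' * ((1 - (x j'' : ℂ) * z) ^ (-(l : ℂ)) * BB l s j x j''))) *
      (TT t x j' *
        ((-(l : ℂ) * (1 - (x j' : ℂ) * z) ^ (-(l : ℂ) - 1) * (-(x j' : ℂ))) * BB l s j x j'))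

lemma hasDerivAt_Gt (i : Fin n) (x : Fin N → ℝ) (z : ℂ) :
    HasDerivAt (fun w => Gt l1 l2 l t s i w x) (Gt' l1 l2 l t s i z x) z := by
  have h1 : ∀ j' ∈ (univ : Finset (Fin N)),
      HasDerivAt (fun w => (1 - (x j' : ℂ) * w) * AA l t s i x j')
        (-(x j' : ℂ) * AA l t s i x j') z := by
    intro j' _
    have hb : HasDerivAt (fun w : ℂ => 1 - (x j' : ℂ) * w) (-(x j' : ℂ)) z := by
      simpa using ((hasDerivAt_id z).const_mul ((x j' : ℂ))).const_sub 1
    simpa using hb.mul_const (AA l t s i x j')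
  have hp := HasDerivAt.finset_prod h1
  have := hp.const_mul ((selbergDensity N l1 l2 l x : ℝ) : ℂ)
  simpa [Gt, Gt', smul_eq_mul] using this

lemma cube_mem {x : Fin N → ℝ} (hx : x ∈ unitCube N) (j' : Fin N) :
    0 ≤ x j' ∧ x j' ≤ 1 := by
  have := hx j' (Set.mem_univ j')
  exact ⟨this.1, this.2⟩

lemma mem_slit_aux {c : ℝ} (hc0 : 0 ≤ c) (hc1 : c ≤ 1) {z : ℂ} (hz : z ∈ slitOne) :
    (1 - (c : ℂ) * z) ∈ Complex.slitPlane := by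
  rw [Complex.mem_slitPlane_iff]
  rcases hz with h | h
  · rcases eq_or_lt_of_le hc0 with h0 | h0
    · left; simp [← h0]
    · right
      simp only [Complex.sub_im, Complex.one_im, Complex.mul_im, Complex.ofReal_re,
        Complex.ofReal_im]
      intro hcon
      have : c * z.im = 0 := by linarith
      rcases mul_eq_zero.1 this with h' | h'
      · exact h0.ne' h'
      · exact h h'
  · left
    simp only [Complex.sub_re, Complex.one_re, Complex.mul_re, Complex.ofReal_re,
      Complex.ofReal_im]
    rcases le_or_gt z.re 0 with h' | h'
    · nlinarith
    · nlinarith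

lemma slit_ne_zero {c : ℝ} (hc0 : 0 ≤ c) (hc1 : c ≤ 1) {z : ℂ} (hz : z ∈ slitOne) :
    (1 - (c : ℂ) * z) ≠ 0 :=
  Complex.slitPlane_ne_zero (mem_slit_aux hc0 hc1 hz)

lemma hasDerivAt_Gs (j : Fin m) {x : Fin N → ℝ} (hx : x ∈ unitCube N) {z : ℂ}
    (hz : z ∈ slitOne) :
    HasDerivAt (fun w => Gs l1 l2 l t s j w x) (Gs' l1 l2 l t s j z x) z := by
  have h1 : ∀ j' ∈ (univ : Finset (Fin N)),
      HasDerivAt (fun w => TT t x j' * ((1 - (x j' : ℂ) * w) ^ (-(l : ℂ)) * BB l s j x j'))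
        (TT t x j' *
          ((-(l : ℂ) * (1 - (x j' : ℂ) * z) ^ (-(l : ℂ) - 1) * (-(x j' : ℂ))) *
            BB l s j x j')) z := by
    intro j' _
    have hb : HasDerivAt (fun w : ℂ => 1 - (x j' : ℂ) * w) (-(x j' : ℂ)) z := by
      simpa using ((hasDerivAt_id z).const_mul ((x j' : ℂ))).const_sub 1
    have hmem := mem_slit_aux (cube_mem hx j').1 (cube_mem hx j').2 hz
    have hpow := hb.cpow_const (c := -(l : ℂ)) hmem
    exact (hpow.mul_const (BB l s j x j')).const_mul (TT t x j')
  have hp := HasDerivAt.finset_prod h1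
  have := hp.const_mul ((selbergDensity N l1 l2 l x : ℝ) : ℂ)
  simpa [Gs, Gs', smul_eq_mul] using this

lemma contOn_cpow_gen {α : Type*} [TopologicalSpace α] {S : Set α} (f : α → ℂ) (c : ℂ)
    (hf : Continuous f) (hmem : ∀ p ∈ S, f p ∈ Complex.slitPlane) :
    ContinuousOn (fun p => f p ^ c) S := fun p hp =>
  ((continuousAt_cpow_const (hmem p hp)).comp hf.continuousAt).continuousWithinAt

lemma cont_coord (j' : Fin N) :
    Continuous (fun p : ℂ × (Fin N → ℝ) => ((p.2 j' : ℝ) : ℂ)) :=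
  Complex.continuous_ofReal.comp ((continuous_apply j').comp continuous_snd)

lemma cont_lin (j' : Fin N) (c : ℂ) :
    Continuous (fun p : ℂ × (Fin N → ℝ) => 1 - ((p.2 j' : ℝ) : ℂ) * c) :=
  continuous_const.sub ((cont_coord j').mul continuous_const)

lemma cont_linZ (j' : Fin N) :
    Continuous (fun p : ℂ × (Fin N → ℝ) => 1 - ((p.2 j' : ℝ) : ℂ) * p.1) :=
  continuous_const.sub ((cont_coord j').mul continuous_fst)

variable {l1 l2 l t s}

lemma contOn_cpowS {S : Set ℂ} (hs : ∀ k, s k ∈ slitOne) (j' : Fin N) (k : Fin m) (c : ℂ) :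
    ContinuousOn (fun p : ℂ × (Fin N → ℝ) => (1 - ((p.2 j' : ℝ) : ℂ) * s k) ^ c)
      (S ×ˢ unitCube N) :=
  contOn_cpow_gen _ c (cont_lin j' (s k)) fun p hp =>
    mem_slit_aux (cube_mem hp.2 j').1 (cube_mem hp.2 j').2 (hs k)

lemma contOn_cpowZ {S : Set ℂ} (hS : S ⊆ slitOne) (j' : Fin N) (c : ℂ) :
    ContinuousOn (fun p : ℂ × (Fin N → ℝ) => (1 - ((p.2 j' : ℝ) : ℂ) * p.1) ^ c)
      (S ×ˢ unitCube N) :=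
  contOn_cpow_gen _ c (cont_linZ j') fun p hp =>
    mem_slit_aux (cube_mem hp.2 j').1 (cube_mem hp.2 j').2 (hS hp.1)

lemma contOn_D (h1 : 0 ≤ l1) (h2 : 0 ≤ l2) (h : 0 ≤ l) :
    Continuous (fun p : ℂ × (Fin N → ℝ) => ((selbergDensity N l1 l2 l p.2 : ℝ) : ℂ)) :=
  Complex.continuous_ofReal.comp ((continuous_selbergDensity N h1 h2 h).comp continuous_snd)

lemma contOn_AA {S : Set ℂ} (hs : ∀ k, s k ∈ slitOne) (i : Fin n) (j' : Fin N) :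
    ContinuousOn (fun p : ℂ × (Fin N → ℝ) => AA l t s i p.2 j') (S ×ˢ unitCube N) := by
  unfold AA
  exact ContinuousOn.mul
    (continuousOn_finset_prod _ fun k _ => (cont_lin j' (t k)).continuousOn)
    (continuousOn_finset_prod _ fun k _ => contOn_cpowS hs j' k _)

lemma contOn_Gt {S : Set ℂ} (h1 : 0 ≤ l1) (h2 : 0 ≤ l2) (h : 0 ≤ l)
    (hs : ∀ k, s k ∈ slitOne) (i : Fin n) :
    ContinuousOn (fun p : ℂ × (Fin N → ℝ) => Gt l1 l2 l t s i p.1 p.2) (S ×ˢ unitCube N) := by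
  unfold Gt
  exact ContinuousOn.mul (contOn_D h1 h2 h).continuousOn
    (continuousOn_finset_prod _ fun j' _ =>
      ContinuousOn.mul (cont_linZ j').continuousOn (contOn_AA hs i j'))

lemma contOn_Gt' {S : Set ℂ} (h1 : 0 ≤ l1) (h2 : 0 ≤ l2) (h : 0 ≤ l)
    (hs : ∀ k, s k ∈ slitOne) (i : Fin n) :
    ContinuousOn (fun p : ℂ × (Fin N → ℝ) => Gt' l1 l2 l t s i p.1 p.2) (S ×ˢ unitCube N) := by
  unfold Gt'
  refine ContinuousOn.mul (contOn_D h1 h2 h).continuousOn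
    (continuousOn_finset_sum _ fun j' _ => ContinuousOn.mul
      (continuousOn_finset_prod _ fun j'' _ =>
        ContinuousOn.mul (cont_linZ j'').continuousOn (contOn_AA hs i j''))
      (ContinuousOn.mul ((cont_coord j').neg).continuousOn (contOn_AA hs i j')))

lemma contOn_TT (j' : Fin N) :
    Continuous (fun p : ℂ × (Fin N → ℝ) => TT t p.2 j') := by
  unfold TT
  exact continuous_finset_prod _ fun k _ => cont_lin j' (t k)

lemma contOn_BB {S : Set ℂ} (hs : ∀ k, s k ∈ slitOne) (j : Fin m) (j' : Fin N) :
    ContinuousOn (fun p : ℂ × (Fin N → ℝ) => BB l s j p.2 j') (S ×ˢ unitCube N) := by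
  unfold BB
  exact continuousOn_finset_prod _ fun k _ => contOn_cpowS hs j' k _

lemma contOn_Gs {S : Set ℂ} (h1 : 0 ≤ l1) (h2 : 0 ≤ l2) (h : 0 ≤ l)
    (hs : ∀ k, s k ∈ slitOne) (hS : S ⊆ slitOne) (j : Fin m) :
    ContinuousOn (fun p : ℂ × (Fin N → ℝ) => Gs l1 l2 l t s j p.1 p.2) (S ×ˢ unitCube N) := by
  unfold Gs
  exact ContinuousOn.mul (contOn_D h1 h2 h).continuousOn
    (continuousOn_finset_prod _ fun j' _ => ContinuousOn.mul (contOn_TT j').continuousOn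
      (ContinuousOn.mul (contOn_cpowZ hS j' _) (contOn_BB hs j j')))

lemma contOn_Gs' {S : Set ℂ} (h1 : 0 ≤ l1) (h2 : 0 ≤ l2) (h : 0 ≤ l)
    (hs : ∀ k, s k ∈ slitOne) (hS : S ⊆ slitOne) (j : Fin m) :
    ContinuousOn (fun p : ℂ × (Fin N → ℝ) => Gs' l1 l2 l t s j p.1 p.2) (S ×ˢ unitCube N) := by
  unfold Gs'
  refine ContinuousOn.mul (contOn_D h1 h2 h).continuousOn
    (continuousOn_finset_sum _ fun j' _ => ContinuousOn.mul
      (continuousOn_finset_prod _ fun j'' _ =>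
        ContinuousOn.mul (contOn_TT j'').continuousOn
          (ContinuousOn.mul (contOn_cpowZ hS j'' _) (contOn_BB hs j j'')))
      (ContinuousOn.mul (contOn_TT j').continuousOn
        (ContinuousOn.mul
          (ContinuousOn.mul
            (ContinuousOn.mul continuousOn_const (contOn_cpowZ hS j' _))
            ((cont_coord j').neg).continuousOn)
          (contOn_BB hs j j'))))

end aux

section cancel

variable {N n m : ℕ} {l1 l2 l : ℝ} {t : Fin n → ℂ} {s : Fin m → ℂ}

lemma hpow_aux {c : ℝ} (hc0 : 0 ≤ c) (hc1 : c ≤ 1) {w : ℂ} (hw : w ∈ slitOne) (l : ℝ) :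
    (1 - (c : ℂ) * w) ^ (-(l : ℂ) - 1) * (1 - (c : ℂ) * w) = (1 - (c : ℂ) * w) ^ (-(l : ℂ)) := by
  have hne := slit_ne_zero hc0 hc1 hw
  nth_rewrite 2 [← Complex.cpow_one (1 - (c : ℂ) * w)]
  rw [← Complex.cpow_add _ _ hne]
  norm_num

lemma factor_eq (l : ℝ) (t : Fin n → ℂ) (s : Fin m → ℂ) (i : Fin n) (j : Fin m)
    (hij : t i = s j) (x : Fin N → ℝ) (j'' : Fin N) :
    (1 - (x j'' : ℂ) * s j) * AA l t s i x j'' =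
      TT t x j'' * ((1 - (x j'' : ℂ) * s j) ^ (-(l : ℂ)) * BB l s j x j'') := by
  unfold AA TT BB
  rw [← Finset.mul_prod_erase univ (fun k => 1 - (x j'' : ℂ) * t k) (mem_univ i),
    ← Finset.mul_prod_erase univ (fun k => (1 - (x j'' : ℂ) * s k) ^ (-(l : ℂ))) (mem_univ j),
    hij]
  ring

lemma cancel_pointwise (hl : 0 < l) (i : Fin n) (j : Fin m) (hij : t i = s j)
    (hsj : s j ∈ slitOne) {x : Fin N → ℝ} (hx : x ∈ unitCube N) :
    Gt' l1 l2 l t s i (s j) x + (1 / (l : ℂ)) * Gs' l1 l2 l t s j (s j) x = 0 := by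
  have hkey : ∀ j' : Fin N,
      (∏ j'' ∈ univ.erase j', ((1 - (x j'' : ℂ) * s j) * AA l t s i x j'')) *
          (-(x j' : ℂ) * AA l t s i x j') +
        (1 / (l : ℂ)) *
          ((∏ j'' ∈ univ.erase j',
              (TT t x j'' * ((1 - (x j'' : ℂ) * s j) ^ (-(l : ℂ)) * BB l s j x j''))) *
            (TT t x j' *
              ((-(l : ℂ) * (1 - (x j' : ℂ) * s j) ^ (-(l : ℂ) - 1) * (-(x j' : ℂ))) *
                BB l s j x j'))) = 0 := by
    intro j'
    have hE : (∏ j'' ∈ univ.erase j',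
        (TT t x j'' * ((1 - (x j'' : ℂ) * s j) ^ (-(l : ℂ)) * BB l s j x j''))) =
        ∏ j'' ∈ univ.erase j', ((1 - (x j'' : ℂ) * s j) * AA l t s i x j'') :=
      Finset.prod_congr rfl fun j'' _ => (factor_eq l t s i j hij x j'').symm
    rw [hE]
    have hT2 : TT t x j' = (1 - (x j' : ℂ) * s j) * ∏ k ∈ univ.erase i, (1 - (x j' : ℂ) * t k) := by
      unfold TT
      rw [← Finset.mul_prod_erase univ (fun k => 1 - (x j' : ℂ) * t k) (mem_univ i), hij]
    have hA : AA l t s i x j' =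
        (∏ k ∈ univ.erase i, (1 - (x j' : ℂ) * t k)) *
          ((1 - (x j' : ℂ) * s j) ^ (-(l : ℂ)) * BB l s j x j') := by
      unfold AA BB
      rw [← Finset.mul_prod_erase univ (fun k => (1 - (x j' : ℂ) * s k) ^ (-(l : ℂ)))
        (mem_univ j)]
    have hpow := hpow_aux (cube_mem hx j').1 (cube_mem hx j').2 hsj l
    rw [hT2, hA]
    have hlne : (l : ℂ) ≠ 0 := Complex.ofReal_ne_zero.2 hl.ne'
    set E := ∏ j'' ∈ univ.erase j', ((1 - (x j'' : ℂ) * s j) * AA l t s i x j'')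
    set R := ∏ k ∈ univ.erase i, (1 - (x j' : ℂ) * t k)
    set B := BB l s j x j'
    set v := 1 - (x j' : ℂ) * s j
    set Q := v ^ (-(l : ℂ))
    set P := v ^ (-(l : ℂ) - 1)
    field_simp
    linear_combination (E * (x j' : ℂ) * R * B) * hpow
  unfold Gt' Gs'
  set D := ((selbergDensity N l1 l2 l x : ℝ) : ℂ)
  set S1 := ∑ j', (∏ j'' ∈ univ.erase j', ((1 - (x j'' : ℂ) * s j) * AA l t s i x j'')) *
      (-(x j' : ℂ) * AA l t s i x j') with hS1
  set S2 := ∑ j', (∏ j'' ∈ univ.erase j',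
        (TT t x j'' * ((1 - (x j'' : ℂ) * s j) ^ (-(l : ℂ)) * BB l s j x j''))) *
      (TT t x j' *
        ((-(l : ℂ) * (1 - (x j' : ℂ) * s j) ^ (-(l : ℂ) - 1) * (-(x j' : ℂ))) *
          BB l s j x j')) with hS2
  have : S1 + (1 / (l : ℂ)) * S2 = 0 := by
    rw [hS1, hS2, Finset.mul_sum, ← Finset.sum_add_distrib]
    exact Finset.sum_eq_zero fun j' _ => hkey j'
  calc D * S1 + 1 / (l : ℂ) * (D * S2) = D * (S1 + (1 / (l : ℂ)) * S2) := by ring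
    _ = 0 := by rw [this, mul_zero]

end cancel




section eqs

variable {N n m : ℕ} (l1 l2 l : ℝ) (t : Fin n → ℂ) (s : Fin m → ℂ)

lemma Gt_eq (i : Fin n) (z : ℂ) (x : Fin N → ℝ) :
    ((selbergDensity N l1 l2 l x : ℝ) : ℂ) *
      ∏ j' : Fin N, ((∏ k, (1 - (x j' : ℂ) * Function.update t i z k)) *
        ∏ k, (1 - (x j' : ℂ) * s k) ^ (-(l : ℂ))) = Gt l1 l2 l t s i z x := by
  unfold Gt AA
  congr 1
  refine Finset.prod_congr rfl fun j' _ => ?_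
  rw [← Finset.mul_prod_erase univ (fun k => 1 - (x j' : ℂ) * Function.update t i z k)
    (mem_univ i), Function.update_self]
  have h2 : ∏ k ∈ univ.erase i, (1 - (x j' : ℂ) * Function.update t i z k) =
      ∏ k ∈ univ.erase i, (1 - (x j' : ℂ) * t k) :=
    Finset.prod_congr rfl fun k hk => by rw [Function.update_of_ne (Finset.mem_erase.1 hk).1]
  rw [h2]; ring

lemma Gs_eq (j : Fin m) (z : ℂ) (x : Fin N → ℝ) :
    ((selbergDensity N l1 l2 l x : ℝ) : ℂ) *
      ∏ j' : Fin N, ((∏ k, (1 - (x j' : ℂ) * t k)) *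
        ∏ k, (1 - (x j' : ℂ) * Function.update s j z k) ^ (-(l : ℂ))) = Gs l1 l2 l t s j z x := by
  unfold Gs TT BB
  congr 1
  refine Finset.prod_congr rfl fun j' _ => ?_
  rw [← Finset.mul_prod_erase univ
    (fun k => (1 - (x j' : ℂ) * Function.update s j z k) ^ (-(l : ℂ))) (mem_univ j),
    Function.update_self]
  have h2 : ∏ k ∈ univ.erase j, (1 - (x j' : ℂ) * Function.update s j z k) ^ (-(l : ℂ)) =
      ∏ k ∈ univ.erase j, (1 - (x j' : ℂ) * s k) ^ (-(l : ℂ)) :=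
    Finset.prod_congr rfl fun k hk => by rw [Function.update_of_ne (Finset.mem_erase.1 hk).1]
  rw [h2]

end eqs

lemma measurableSet_unitCube (N : ℕ) : MeasurableSet (unitCube N) :=
  MeasurableSet.univ_pi fun _ => measurableSet_Icc

lemma isCompact_unitCube (N : ℕ) : IsCompact (unitCube N) :=
  isCompact_univ_pi fun _ => isCompact_Icc

lemma isOpen_slitOne : IsOpen slitOne := by
  have : slitOne = Complex.im ⁻¹' ({0}ᶜ) ∪ Complex.re ⁻¹' (Set.Iio 1) := by
    ext z; simp [slitOne]
  rw [this]
  exact (isOpen_compl_singleton.preimage Complex.continuous_im).union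
    (isOpen_Iio.preimage Complex.continuous_re)

lemma key_deriv {N : ℕ} (G G' : ℂ → (Fin N → ℝ) → ℂ) (z0 : ℂ) (ε : ℝ) (hε : 0 < ε)
    (hG : ContinuousOn (fun p : ℂ × (Fin N → ℝ) => G p.1 p.2)
      (Metric.closedBall z0 ε ×ˢ unitCube N))
    (hG' : ContinuousOn (fun p : ℂ × (Fin N → ℝ) => G' p.1 p.2)
      (Metric.closedBall z0 ε ×ˢ unitCube N))
    (hd : ∀ x ∈ unitCube N, ∀ z ∈ Metric.ball z0 ε, HasDerivAt (fun w => G w x) (G' z x) z) :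
    Integrable (G' z0) (volume.restrict (unitCube N)) ∧
      HasDerivAt (fun z => ∫ x in unitCube N, G z x) (∫ x in unitCube N, G' z0 x) z0 := by
  have hcube := isCompact_unitCube N
  have hmcube := measurableSet_unitCube N
  have hK : IsCompact (Metric.closedBall z0 ε ×ˢ unitCube N) :=
    (isCompact_closedBall z0 ε).prod hcube
  have hvol : volume (unitCube N) < ⊤ := hcube.measure_lt_top
  have hslice : ∀ z ∈ Metric.closedBall z0 ε, ContinuousOn (fun x => G z x) (unitCube N) := by
    intro z hz
    have : ContinuousOn ((fun p : ℂ × (Fin N → ℝ) => G p.1 p.2) ∘ (fun x => (z, x)))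
        (unitCube N) :=
      hG.comp (Continuous.continuousOn (by continuity)) fun x hx => ⟨hz, hx⟩
    exact this
  have hslice' : ContinuousOn (fun x => G' z0 x) (unitCube N) := by
    have : ContinuousOn ((fun p : ℂ × (Fin N → ℝ) => G' p.1 p.2) ∘ (fun x => (z0, x)))
        (unitCube N) :=
      hG'.comp (Continuous.continuousOn (by continuity))
        fun x hx => ⟨Metric.mem_closedBall_self hε.le, hx⟩
    exact this
  obtain ⟨C, hC⟩ := hK.exists_bound_of_continuousOn hG'
  exact hasDerivAt_integral_of_dominated_loc_of_deriv_le (F := fun z x => G z x)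
    (F' := fun z x => G' z x) (x₀ := z0) (bound := fun _ => C)
    (μ := volume.restrict (unitCube N)) (Metric.ball_mem_nhds z0 hε)
    (Filter.eventually_of_mem (Metric.ball_mem_nhds z0 hε) fun z hz =>
      ((hslice z (Metric.ball_subset_closedBall hz)).aestronglyMeasurable hmcube))
    ((hslice z0 (Metric.mem_closedBall_self hε.le)).integrableOn_compact hcube)
    (hslice'.aestronglyMeasurable hmcube)
    ((ae_restrict_mem hmcube).mono fun x hx z hz =>
      hC (z, x) ⟨Metric.ball_subset_closedBall hz, hx⟩)
    (integrableOn_const hvol.ne)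
    ((ae_restrict_mem hmcube).mono fun x hx z hz => hd x hx z hz)


/-- the deformed Selberg integral satisfies the cancellation condition
`∂F/∂tᵢ + (1/λ)∂F/∂sⱼ = 0` at every point with `tᵢ = sⱼ ∈ ℂ∖[1,∞)`. -/
theorem stmt2 (N n m : ℕ) (hN : 1 ≤ N) (l1 l2 l : ℝ)
    (hl1 : 0 < l1) (hl2 : 0 < l2) (hl : 0 < l)
    (t : Fin n → ℂ) (s : Fin m → ℂ)
    (hs : ∀ j, s j ∈ slitOne)
    (i : Fin n) (j : Fin m) (hij : t i = s j) :
    pdT (deformedSelberg N n m l1 l2 l) i t s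
      + (1 / (l : ℂ)) * pdS (deformedSelberg N n m l1 l2 l) j t s = 0 := by
  obtain ⟨δ, hδ, hball⟩ := Metric.isOpen_iff.1 isOpen_slitOne (s j) (hs j)
  have hε : 0 < δ / 2 := by linarith
  have hcb : Metric.closedBall (s j) (δ / 2) ⊆ slitOne :=
    (Metric.closedBall_subset_ball (by linarith)).trans hball
  have kT := key_deriv (Gt (N := N) l1 l2 l t s i) (Gt' (N := N) l1 l2 l t s i) (s j) (δ / 2) hε
    (contOn_Gt hl1.le hl2.le hl.le hs i)
    (contOn_Gt' hl1.le hl2.le hl.le hs i)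
    (fun x _ z _ => hasDerivAt_Gt (N := N) l1 l2 l t s i x z)
  have kS := key_deriv (Gs (N := N) l1 l2 l t s j) (Gs' (N := N) l1 l2 l t s j) (s j) (δ / 2) hε
    (contOn_Gs hl1.le hl2.le hl.le hs hcb j)
    (contOn_Gs' hl1.le hl2.le hl.le hs hcb j)
    (fun x hx z hz =>
      hasDerivAt_Gs l1 l2 l t s j hx (hcb (Metric.ball_subset_closedBall hz)))
  have hT1 : pdT (deformedSelberg N n m l1 l2 l) i t s
      = ∫ x in unitCube N, Gt' l1 l2 l t s i (s j) x := by
    rw [pdT]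
    have hfun : (fun z => deformedSelberg N n m l1 l2 l (Function.update t i z) s)
        = fun z => ∫ x in unitCube N, Gt l1 l2 l t s i z x := by
      funext z
      rw [deformedSelberg]
      exact setIntegral_congr_fun (measurableSet_unitCube N)
        fun x _ => Gt_eq l1 l2 l t s i z x
    rw [hfun, hij]
    exact kT.2.deriv
  have hS1 : pdS (deformedSelberg N n m l1 l2 l) j t s
      = ∫ x in unitCube N, Gs' l1 l2 l t s j (s j) x := by
    rw [pdS]
    have hfun : (fun z => deformedSelberg N n m l1 l2 l t (Function.update s j z))
        = fun z => ∫ x in unitCube N, Gs l1 l2 l t s j z x := by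
      funext z
      rw [deformedSelberg]
      exact setIntegral_congr_fun (measurableSet_unitCube N)
        fun x _ => Gs_eq l1 l2 l t s j z x
    rw [hfun]
    exact kS.2.deriv
  rw [hT1, hS1, ← integral_const_mul, ← integral_add kT.1 (kS.1.const_mul _)]
  rw [setIntegral_congr_fun (measurableSet_unitCube N)
    (fun x hx => cancel_pointwise hl i j hij (hs j) hx)]
  exact integral_zero _ _
end

section
/- Let n, m ≥ 0 be integers, α > 0 real, and a ∈ ℂ. Let Ω ⊆ ℂ^{n+m} be open and let G be holomorphic on Ω satisfying the cancellation property: for all i ≤ n < j ≤ n+m, (ρ_i ∂G/∂w_i − ρ_j ∂G/∂w_j)(w) = 0 whenever w ∈ Ω and w_i = w_j. Define H(w) = ∏_{i=1}^n w_i^{−a} · ∏_{j=1}^m w_{n+j}^{αa} · G(1/w₁,…,1/w_{n+m}) using principal branch powers. Then H satisfies the same cancellation property: for all i ≤ n < j ≤ n+m, (ρ_i ∂H/∂w_i − ρ_j ∂H/∂w_j)(w) = 0 at every point w with all coordinates in ℂ∖(−∞,0], w_i = w_j, and (1/w₁,…,1/w_{n+m}) ∈ Ω. -/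
open Finset

/-- Partial derivative of `F(w)` in the variable `w i`. -/
noncomputable def pdW {N : ℕ} (F : (Fin N → ℂ) → ℂ) (i : Fin N) (w : Fin N → ℂ) : ℂ :=
  deriv (fun z => F (Function.update w i z)) (w i)

/-- The grading `ρᵢ = 1` for `i ≤ n` (even variables), `ρᵢ = -1/α` for `i > n`
(odd variables). -/
noncomputable def rho (n m : ℕ) (α : ℝ) (i : Fin (n + m)) : ℂ :=
  if (i : ℕ) < n then 1 else -1 / (α : ℂ)

/-- The deformed operator `𝒮ℒᵢ^{(a,b,c)}` acting on functions of the graded variables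
`w₁,…,w_{n+m}`. -/
noncomputable def SLop (n m : ℕ) (α : ℝ) (a b c : ℂ) (F : (Fin (n + m) → ℂ) → ℂ)
    (i : Fin (n + m)) (w : Fin (n + m) → ℂ) : ℂ :=
  rho n m α i * w i * (1 - w i) * pdW (fun v => pdW F i v) i w
    + c * pdW F i w - (a + b + rho n m α i) * w i * pdW F i w
    + (1 / (α : ℂ)) * ∑ j ∈ univ.filter (fun j => j ≠ i),
        (1 / (rho n m α i * rho n m α j)) * (w j / (w i - w j)) *
          (rho n m α i * (1 - w i) * pdW F i w - rho n m α j * (1 - w j) * pdW F j w)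

/-- The transform `H(w) = ∏_{i≤n} wᵢ^{-a} ∏_{j>n} wⱼ^{αa} ⬝ G(1/w₁,…,1/w_{n+m})`,
with principal branch powers. -/
noncomputable def invTrans (n m : ℕ) (α : ℝ) (a : ℂ) (G : (Fin (n + m) → ℂ) → ℂ)
    (w : Fin (n + m) → ℂ) : ℂ :=
  (∏ i : Fin (n + m), w i ^ (if (i : ℕ) < n then -a else (α : ℂ) * a)) *
    G (fun i => (w i)⁻¹)

lemma pdW_invTrans (n m : ℕ) (α : ℝ) (a : ℂ)
    (Ω : Set (Fin (n + m) → ℂ)) (hΩ : IsOpen Ω)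
    (G : (Fin (n + m) → ℂ) → ℂ) (hG : DifferentiableOn ℂ G Ω)
    (w : Fin (n + m) → ℂ)
    (hw : ∀ i, w i ∈ Complex.slitPlane)
    (hmem : (fun i => (w i)⁻¹) ∈ Ω)
    (k : Fin (n + m)) :
    pdW (invTrans n m α a G) k w
      = (∏ i : Fin (n + m), w i ^ (if (i : ℕ) < n then -a else (α : ℂ) * a)) *
        ((if (k : ℕ) < n then -a else (α : ℂ) * a) * (w k)⁻¹ * G (fun i => (w i)⁻¹)
          - (w k ^ 2)⁻¹ * pdW G k (fun i => (w i)⁻¹)) := by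
  set e : Fin (n + m) → ℂ := fun i => if (i : ℕ) < n then -a else (α : ℂ) * a with he
  set v : Fin (n + m) → ℂ := fun i => (w i)⁻¹ with hv
  have hz : ∀ i, w i ≠ 0 := fun i => Complex.slitPlane_ne_zero (hw i)
  set C : ℂ := ∏ i ∈ univ.erase k, w i ^ e i with hC
  have hGa : DifferentiableAt ℂ G v := hG.differentiableAt (hΩ.mem_nhds hmem)
  have hg : DifferentiableAt ℂ (fun z => G (Function.update v k z)) (v k) := by
    have := (hasDerivAt_update v k (v k)).differentiableAt
    have h2 : Function.update v k (v k) = v := Function.update_eq_self k v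
    exact (h2 ▸ hGa).comp (v k) this
  have hgd : HasDerivAt (fun z => G (Function.update v k z)) (pdW G k v) (v k) :=
    hg.hasDerivAt
  have hinv : HasDerivAt (fun z : ℂ => z⁻¹) (-(w k ^ 2)⁻¹) (w k) := hasDerivAt_inv (hz k)
  have hcomp : HasDerivAt (fun z : ℂ => G (Function.update v k z⁻¹))
      (pdW G k v * -(w k ^ 2)⁻¹) (w k) := by
    have := HasDerivAt.comp (h₂ := fun z => G (Function.update v k z)) (w k) hgd hinv
    exact this
  have hpow : HasDerivAt (fun z : ℂ => z ^ e k) (e k * w k ^ (e k - 1) * 1) (w k) :=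
    (hasDerivAt_id (w k)).cpow_const (hw k)
  have hfull : HasDerivAt (fun z : ℂ => z ^ e k * C * G (Function.update v k z⁻¹))
      ((e k * w k ^ (e k - 1) * 1 * C) * G (Function.update v k (w k)⁻¹)
        + (w k ^ e k * C) * (pdW G k v * -(w k ^ 2)⁻¹)) (w k) :=
    (hpow.mul_const C).mul hcomp
  have heq : (fun z : ℂ => invTrans n m α a G (Function.update w k z))
      = fun z : ℂ => z ^ e k * C * G (Function.update v k z⁻¹) := by
    funext z
    unfold invTrans
    congr 1
    · rw [show (fun i => Function.update w k z i ^ e i)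
        = Function.update (fun i => w i ^ e i) k (z ^ e k) by
          funext l
          rcases eq_or_ne l k with rfl | h
          · simp
          · simp [Function.update_of_ne h]]
      rw [Finset.prod_update_of_mem (mem_univ k), Finset.sdiff_singleton_eq_erase]
    · congr 1
      funext l
      rcases eq_or_ne l k with rfl | h
      · simp
      · simp [Function.update_of_ne h, hv]
  have hP : ∏ i : Fin (n + m), w i ^ e i = w k ^ e k * C := by
    exact (Finset.mul_prod_erase univ (fun i => w i ^ e i) (mem_univ k)).symm
  rw [pdW, heq, hfull.deriv, hP]
  have h1 : w k ^ (e k - 1) = w k ^ e k * (w k)⁻¹ := by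
    rw [Complex.cpow_sub _ _ (hz k), Complex.cpow_one, div_eq_mul_inv]
  have h2 : Function.update v k (w k)⁻¹ = v := Function.update_eq_self k v
  rw [h1, h2]
  ring

/-- if `G` satisfies the cancellation property
`(ρᵢ ∂G/∂wᵢ - ρⱼ ∂G/∂wⱼ)|_{wᵢ=wⱼ} = 0` for variables of opposite parity on `Ω`, then so does
`H(w) = ∏ wᵢ^{-a/ρᵢ} G(1/w)`. -/
theorem stmt7 (n m : ℕ) (α : ℝ) (hα : 0 < α) (a : ℂ)
    (Ω : Set (Fin (n + m) → ℂ)) (hΩ : IsOpen Ω)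
    (G : (Fin (n + m) → ℂ) → ℂ) (hG : DifferentiableOn ℂ G Ω)
    (hcan : ∀ w ∈ Ω, ∀ i j : Fin (n + m), (i : ℕ) < n → n ≤ (j : ℕ) → w i = w j →
      rho n m α i * pdW G i w - rho n m α j * pdW G j w = 0)
    (w : Fin (n + m) → ℂ)
    (hw : ∀ i, w i ∈ Complex.slitPlane)
    (hmem : (fun i => (w i)⁻¹) ∈ Ω)
    (i j : Fin (n + m)) (hi : (i : ℕ) < n) (hj : n ≤ (j : ℕ)) (hij : w i = w j) :
    rho n m α i * pdW (invTrans n m α a G) i w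
      - rho n m α j * pdW (invTrans n m α a G) j w = 0 := by
  have hαz : (α : ℂ) ≠ 0 := by exact_mod_cast hα.ne'
  have hwj : w j ≠ 0 := Complex.slitPlane_ne_zero (hw j)
  have h0 := hcan _ hmem i j hi hj (by simp [hij])
  rw [pdW_invTrans n m α a Ω hΩ G hG w hw hmem i,
      pdW_invTrans n m α a Ω hΩ G hG w hw hmem j, hij]
  simp only [rho, if_pos hi, if_neg (not_lt.mpr hj)] at h0 ⊢
  have hDi : pdW G i (fun i => (w i)⁻¹) = (-1 / (α:ℂ)) * pdW G j (fun i => (w i)⁻¹) := by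
    linear_combination h0
  rw [hDi]
  field_simp
  ring
end

section
/- (James's lemma.) Let F be a field and n ≥ 1 an integer. In the polynomial ring F[y₁,…,y_n], let r_k denote the k-th elementary symmetric polynomial in y₁,…,y_n for 1 ≤ k ≤ n, with r₀ = 1, and let r_k^{(1)} denote the k-th elementary symmetric polynomial in y₂,…,y_n for 0 ≤ k ≤ n−1 (with r₀^{(1)} = 1). Let λ₀,…,λ_{n−1} ∈ F[X₁,…,X_n] be polynomials in n indeterminates. If Σ_{k=0}^{n−1} λ_k(r₁,…,r_n) · r_k^{(1)} = 0 in F[y₁,…,y_n], then λ_k(r₁,…,r_n) = 0 for every k = 0, 1, …, n−1. -/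
open Finset

open MvPolynomial in
/-- Expansion of the elementary symmetric polynomial of `univ.erase i` in powers of `X i`. -/
lemma stmt9_auxB (F : Type*) [Field F] (n : ℕ) (i : Fin n) (m : ℕ) :
    ∑ T ∈ Finset.powersetCard m ((univ : Finset (Fin n)).erase i),
        ∏ x ∈ T, (X x : MvPolynomial (Fin n) F)
      = ∑ j ∈ range (m + 1), (-1) ^ j * X i ^ j * esymm (Fin n) F (m - j) := by
  induction m with
  | zero => simp [esymm_zero]
  | succ m ih =>
    have hins : (univ : Finset (Fin n)) = insert i (univ.erase i) :=
      (insert_erase (mem_univ i)).symm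
    have hdisj : Disjoint (powersetCard (m + 1) ((univ : Finset (Fin n)).erase i))
        ((powersetCard m ((univ : Finset (Fin n)).erase i)).image (insert i)) := by
      rw [disjoint_left]
      intro T hT hT'
      have h1 : i ∉ T := fun hi =>
        (notMem_erase i univ) ((mem_powersetCard.mp hT).1 hi)
      obtain ⟨T', _, rfl⟩ := mem_image.mp hT'
      exact h1 (mem_insert_self i T')
    have hrec : esymm (Fin n) F (m + 1)
        = (∑ T ∈ powersetCard (m + 1) ((univ : Finset (Fin n)).erase i), ∏ x ∈ T, X x)
          + X i * ∑ T ∈ powersetCard m ((univ : Finset (Fin n)).erase i), ∏ x ∈ T, X x := by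
      have h1 : esymm (Fin n) F (m + 1)
          = ∑ T ∈ powersetCard (m + 1) (insert i ((univ : Finset (Fin n)).erase i)),
              ∏ x ∈ T, (X x : MvPolynomial (Fin n) F) := by
        rw [esymm, ← hins]
      rw [h1, powersetCard_succ_insert (notMem_erase i univ), sum_union hdisj]
      congr 1
      have hinj : ∀ T₁ ∈ powersetCard m ((univ : Finset (Fin n)).erase i),
          ∀ T₂ ∈ powersetCard m ((univ : Finset (Fin n)).erase i),
          insert i T₁ = insert i T₂ → T₁ = T₂ := by
        intro T₁ h₁ T₂ h₂ h
        have hi₁ : i ∉ T₁ := fun hi => (notMem_erase i univ) ((mem_powersetCard.mp h₁).1 hi)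
        have hi₂ : i ∉ T₂ := fun hi => (notMem_erase i univ) ((mem_powersetCard.mp h₂).1 hi)
        rw [← erase_insert hi₁, ← erase_insert hi₂, h]
      rw [sum_image hinj, mul_sum]
      refine sum_congr rfl fun T hT => ?_
      have hi : i ∉ T := fun hi => (notMem_erase i univ) ((mem_powersetCard.mp hT).1 hi)
      rw [prod_insert hi]
    have hL : (∑ T ∈ powersetCard (m + 1) ((univ : Finset (Fin n)).erase i),
        ∏ x ∈ T, (X x : MvPolynomial (Fin n) F))
        = esymm (Fin n) F (m + 1)
          - X i * ∑ T ∈ powersetCard m ((univ : Finset (Fin n)).erase i), ∏ x ∈ T, X x := by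
      rw [hrec]; ring
    rw [hL, ih]
    conv_rhs => rw [sum_range_succ']
    simp only [Nat.succ_sub_succ_eq_sub, pow_zero, one_mul, Nat.sub_zero]
    rw [mul_sum]
    set S := ∑ j ∈ range (m + 1),
      (-1 : MvPolynomial (Fin n) F) ^ (j + 1) * X i ^ (j + 1) * esymm (Fin n) F (m - j) with hS
    have : ∑ j ∈ range (m + 1),
        X i * ((-1 : MvPolynomial (Fin n) F) ^ j * X i ^ j * esymm (Fin n) F (m - j)) = -S := by
      rw [hS, ← sum_neg_distrib]
      exact sum_congr rfl fun j _ => by ring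
    rw [this]
    ring

/-- James's lemma: if `Σ_{k=0}^{n-1} λ_k(r₁,…,r_n)·r_k^{(1)} = 0` in
`F[y₁,…,y_n]`, where `r_j` is the `j`-th elementary symmetric polynomial in `y₁,…,y_n` and
`r_k^{(1)}` the `k`-th elementary symmetric polynomial in `y₂,…,y_n`, then each
`λ_k(r₁,…,r_n) = 0`. -/
theorem stmt9 (F : Type*) [Field F] (n : ℕ) (hn : 1 ≤ n)
    (lam : Fin n → MvPolynomial (Fin n) F)
    (hsum : ∑ k : Fin n,
        (MvPolynomial.aeval fun j : Fin n => MvPolynomial.esymm (Fin n) F ((j : ℕ) + 1))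
            (lam k) *
          ∑ T ∈ Finset.powersetCard (k : ℕ) ((univ : Finset (Fin n)).erase ⟨0, hn⟩),
            ∏ i ∈ T, MvPolynomial.X i
        = 0) :
    ∀ k : Fin n,
      (MvPolynomial.aeval fun j : Fin n => MvPolynomial.esymm (Fin n) F ((j : ℕ) + 1))
        (lam k) = 0 := by
  classical
  set a : Fin n → MvPolynomial (Fin n) F := fun k =>
    (MvPolynomial.aeval fun j : Fin n => MvPolynomial.esymm (Fin n) F ((j : ℕ) + 1))
      (lam k) with ha
  set e : ℕ → MvPolynomial (Fin n) F := fun m => MvPolynomial.esymm (Fin n) F m with he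
  set i0 : Fin n := ⟨0, hn⟩ with hi0
  -- each `a k` is fixed by every renaming of the variables
  have ha_sym : ∀ (k : Fin n) (σ : Equiv.Perm (Fin n)),
      MvPolynomial.rename σ (a k) = a k := by
    intro k σ
    simp only [ha]
    rw [MvPolynomial.comp_aeval_apply]
    simp only [MvPolynomial.rename_esymm]
  set S : ℕ → MvPolynomial (Fin n) F := fun j =>
    ∑ k : Fin n, if j ≤ (k : ℕ) then a k * e ((k : ℕ) - j) else 0 with hS
  set c : ℕ → MvPolynomial (Fin n) F := fun j => (-1) ^ j * S j with hc
  -- rewrite the hypothesis as a relation among powers of `X i0`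
  have hc0 : ∑ j ∈ range n, c j * MvPolynomial.X i0 ^ j = 0 := by
    have h2 : ∑ k : Fin n, a k * ∑ T ∈ Finset.powersetCard (k : ℕ)
        ((univ : Finset (Fin n)).erase i0), ∏ i ∈ T, MvPolynomial.X i = 0 := hsum
    rw [← h2]
    symm
    calc ∑ k : Fin n, a k * ∑ T ∈ Finset.powersetCard (k : ℕ)
          ((univ : Finset (Fin n)).erase i0), ∏ i ∈ T, MvPolynomial.X i
        = ∑ k : Fin n, ∑ j ∈ range n,
            (if j ≤ (k : ℕ) then a k * e ((k : ℕ) - j) else 0)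
              * ((-1) ^ j * MvPolynomial.X i0 ^ j) := by
          refine Finset.sum_congr rfl fun k _ => ?_
          rw [stmt9_auxB F n i0 (k : ℕ), Finset.mul_sum]
          have hfil : (range n).filter (fun j => j ≤ (k : ℕ)) = range ((k : ℕ) + 1) := by
            ext j
            simp only [mem_filter, mem_range]
            have := k.isLt
            omega
          simp only [ite_mul, zero_mul]
          rw [← Finset.sum_filter, hfil]
          refine Finset.sum_congr rfl fun j _ => ?_
          simp only [he]
          ring
      _ = ∑ j ∈ range n, c j * MvPolynomial.X i0 ^ j := by
          rw [Finset.sum_comm]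
          refine Finset.sum_congr rfl fun j _ => ?_
          rw [← Finset.sum_mul, hc]
          ring
  -- by symmetry, the same holds with any `X i` in place of `X i0`
  have hci : ∀ (σ : Equiv.Perm (Fin n)) (j : ℕ), MvPolynomial.rename σ (c j) = c j := by
    intro σ j
    simp only [hc]
    rw [map_mul, map_pow, map_neg, map_one]
    congr 1
    simp only [hS, map_sum]
    refine Finset.sum_congr rfl fun k _ => ?_
    split_ifs with h
    · rw [map_mul, ha_sym]
      congr 1
      simp only [he, MvPolynomial.rename_esymm]
    · exact map_zero _
  have hall : ∀ i : Fin n, ∑ j ∈ range n, c j * MvPolynomial.X i ^ j = 0 := by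
    intro i
    have := congrArg (MvPolynomial.rename (Equiv.swap i0 i)) hc0
    simp only [map_sum, map_mul, map_pow, MvPolynomial.rename_X, map_zero] at this
    have hswap : (Equiv.swap i0 i) i0 = i := Equiv.swap_apply_left i0 i
    simp only [hci, hswap] at this
    exact this
  -- Vandermonde argument: all `c j` vanish
  set V : Matrix (Fin n) (Fin n) (MvPolynomial (Fin n) F) :=
    Matrix.vandermonde (fun i : Fin n => MvPolynomial.X i) with hV
  have hdet : V.det ≠ 0 := by
    rw [hV, Matrix.det_vandermonde]
    refine Finset.prod_ne_zero_iff.mpr fun i _ => ?_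
    refine Finset.prod_ne_zero_iff.mpr fun j hj => ?_
    have hij : i ≠ j := fun h => by simp [h] at hj
    exact sub_ne_zero.mpr fun h => hij (MvPolynomial.X_injective h).symm
  have hmv : V.mulVec (fun j : Fin n => c (j : ℕ)) = 0 := by
    funext i
    have : V.mulVec (fun j : Fin n => c (j : ℕ)) i
        = ∑ j ∈ range n, c j * MvPolynomial.X i ^ j := by
      rw [Matrix.mulVec, dotProduct]
      rw [← Fin.sum_univ_eq_sum_range (fun j => c j * MvPolynomial.X i ^ j) n]
      refine Finset.sum_congr rfl fun j _ => ?_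
      rw [hV, Matrix.vandermonde_apply]
      ring
    rw [this, hall i]
    rfl
  have hcz : ∀ j, j < n → c j = 0 := by
    intro j hj
    have h1 : V.det • (fun j : Fin n => c (j : ℕ)) = 0 := by
      calc V.det • (fun j : Fin n => c (j : ℕ))
          = (V.det • (1 : Matrix (Fin n) (Fin n) (MvPolynomial (Fin n) F))).mulVec
              (fun j : Fin n => c (j : ℕ)) := by
            rw [Matrix.smul_mulVec, Matrix.one_mulVec]
        _ = (V.adjugate * V).mulVec (fun j : Fin n => c (j : ℕ)) := by
            rw [Matrix.adjugate_mul]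
        _ = V.adjugate.mulVec (V.mulVec (fun j : Fin n => c (j : ℕ))) := by
            rw [Matrix.mulVec_mulVec]
        _ = 0 := by rw [hmv, Matrix.mulVec_zero]
    have h2 := congrFun h1 ⟨j, hj⟩
    simp only [Pi.smul_apply, smul_eq_mul, Pi.zero_apply] at h2
    rcases mul_eq_zero.mp h2 with h | h
    · exact absurd h hdet
    · exact h
  have hSz : ∀ j, j < n → S j = 0 := by
    intro j hj
    have := hcz j hj
    rw [hc] at this
    rcases mul_eq_zero.mp this with h | h
    · exact absurd h (pow_ne_zero j (neg_ne_zero.mpr one_ne_zero))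
    · exact h
  -- downward induction to recover each `a k = 0`
  have final : ∀ m : ℕ, ∀ k : Fin n, n - m ≤ (k : ℕ) → a k = 0 := by
    intro m
    induction m with
    | zero => intro k hk; exact absurd k.isLt (by omega)
    | succ m ih =>
      intro k hk
      by_cases hcase : n - m ≤ (k : ℕ)
      · exact ih k hcase
      · have hSk := hSz (k : ℕ) k.isLt
        have hkey : S (k : ℕ) = a k := by
          simp only [hS]
          rw [Finset.sum_eq_single k]
          · simp [he, MvPolynomial.esymm_zero]
          · intro k' _ hne
            by_cases hle : (k : ℕ) ≤ (k' : ℕ)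
            · have hlt : (k : ℕ) < (k' : ℕ) :=
                lt_of_le_of_ne hle fun h => hne (Fin.ext h.symm)
              have : a k' = 0 := ih k' (by omega)
              simp [hle, this]
            · simp [hle]
          · intro h; exact absurd (mem_univ k) h
        rw [← hkey]
        exact hSk
  intro k
  exact final n k (by omega)
end

section
/- Let α > 0 be real and M ≥ 1 an integer. Let κ be a partition with length ℓ (number of nonzero parts) and largest part κ₁. Then: (i) the generalized Pochhammer symbol [−M]_κ^{(α)} is nonzero if κ₁ ≤ M, and equals zero if κ₁ > M; (ii) [M/α]_κ^{(α)} is nonzero if ℓ ≤ M, and equals zero if ℓ > M. -/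
open Finset

/-- The generalized Pochhammer symbol
`[x]_κ^{(α)} = ∏_{i≥1} ∏_{j=0}^{κ_i-1} (x - (i-1)/α + j)`, for a 0-indexed finitely supported
weakly decreasing sequence `κ`. -/
noncomputable def genPoch (α x : ℝ) (κ : ℕ → ℕ) : ℝ :=
  ∏ᶠ i : ℕ, ∏ j ∈ Finset.range (κ i), (x - (i : ℝ) / α + (j : ℝ))

/-- for `α > 0` and a positive integer `M`:
(i) `[-M]_κ^{(α)} ≠ 0` if `κ₁ ≤ M`, and `[-M]_κ^{(α)} = 0` if `κ₁ > M`;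
(ii) `[M/α]_κ^{(α)} ≠ 0` if `ℓ(κ) ≤ M`, and `[M/α]_κ^{(α)} = 0` if `ℓ(κ) > M`. -/
theorem stmt10 (α : ℝ) (hα : 0 < α) (M : ℕ) (hM : 1 ≤ M) (κ : ℕ → ℕ)
    (hdec : Antitone κ) (hfin : (Function.support κ).Finite) :
    ((κ 0 ≤ M → genPoch α (-(M : ℝ)) κ ≠ 0) ∧
      (M < κ 0 → genPoch α (-(M : ℝ)) κ = 0)) ∧
    ((Set.ncard (Function.support κ) ≤ M → genPoch α ((M : ℝ) / α) κ ≠ 0) ∧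
      (M < Set.ncard (Function.support κ) → genPoch α ((M : ℝ) / α) κ = 0)) := by
  have hsub : ∀ x : ℝ, Function.mulSupport
      (fun i => ∏ j ∈ Finset.range (κ i), (x - (i : ℝ) / α + (j : ℝ))) ⊆
      Function.support κ := by
    intro x i hi
    simp only [Function.mem_mulSupport] at hi
    simp only [Function.mem_support]
    intro h0
    exact hi (by simp [h0])
  have hfin' : ∀ x : ℝ, (Function.mulSupport
      (fun i => ∏ j ∈ Finset.range (κ i), (x - (i : ℝ) / α + (j : ℝ)))).Finite :=
    fun x => hfin.subset (hsub x)
  have hcard : ∀ i, κ i ≠ 0 → i < Set.ncard (Function.support κ) := by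
    intro i hi
    have hss : (↑(Finset.range (i + 1)) : Set ℕ) ⊆ Function.support κ := by
      intro j hj
      simp only [Finset.coe_range, Set.mem_Iio] at hj
      have : κ i ≤ κ j := hdec (Nat.lt_succ_iff.mp hj)
      exact fun h0 => hi (Nat.le_zero.mp (h0 ▸ this))
    have := Set.ncard_le_ncard hss hfin
    rw [Set.ncard_coe_finset, Finset.card_range] at this
    omega
  constructor
  · constructor
    · intro hκM
      rw [genPoch, finprod_eq_prod _ (hfin' _)]
      apply Finset.prod_ne_zero_iff.mpr
      intro i _
      apply Finset.prod_ne_zero_iff.mpr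
      intro j hj
      have hjM : j < M := lt_of_lt_of_le (Finset.mem_range.mp hj) (le_trans (hdec (Nat.zero_le i)) hκM)
      have h1 : (j : ℝ) < (M : ℝ) := by exact_mod_cast hjM
      have h2 : 0 ≤ (i : ℝ) / α := div_nonneg (Nat.cast_nonneg i) hα.le
      intro h
      have : -(M : ℝ) - (i : ℝ) / α + (j : ℝ) < 0 := by linarith
      exact absurd h this.ne
    · intro hMκ
      apply finprod_eq_zero _ 0 _ (hfin' _)
      apply Finset.prod_eq_zero (Finset.mem_range.mpr hMκ)
      simp
  · constructor
    · intro hℓM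
      rw [genPoch, finprod_eq_prod _ (hfin' _)]
      apply Finset.prod_ne_zero_iff.mpr
      intro i hi
      apply Finset.prod_ne_zero_iff.mpr
      intro j _
      have hiκ : κ i ≠ 0 := by
        have := hsub ((M : ℝ) / α) ((hfin' _).mem_toFinset.mp hi)
        exact this
      have hiM : i < M := lt_of_lt_of_le (hcard i hiκ) hℓM
      have h1 : (i : ℝ) < (M : ℝ) := by exact_mod_cast hiM
      have h2 : 0 < (M : ℝ) / α - (i : ℝ) / α := by
        rw [div_sub_div_same]
        exact div_pos (by linarith) hα
      have h3 : 0 ≤ (j : ℝ) := Nat.cast_nonneg j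
      intro h
      have : (0 : ℝ) < (M : ℝ) / α - (i : ℝ) / α + (j : ℝ) := by linarith
      exact absurd h this.ne'
    · intro hMℓ
      have hκM : κ M ≠ 0 := by
        intro h0
        have hss : Function.support κ ⊆ (↑(Finset.range M) : Set ℕ) := by
          intro j hj
          simp only [Finset.coe_range, Set.mem_Iio]
          by_contra hjM
          have : κ j ≤ κ M := hdec (le_of_not_gt hjM)
          exact hj (Nat.le_zero.mp (h0 ▸ this))
        have := Set.ncard_le_ncard hss (Finset.range M).finite_toSet
        rw [Set.ncard_coe_finset, Finset.card_range] at this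
        omega
      apply finprod_eq_zero _ M _ (hfin' _)
      apply Finset.prod_eq_zero (Finset.mem_range.mpr (Nat.pos_of_ne_zero hκM))
      simp
end

section
/- Let n, m ≥ 0 be integers, α > 0 real, and a, b, c ∈ ℂ. Let F be a function twice complex-differentiable at a point (t,s) ∈ ℂⁿ × ℂ^m at which t₁,…,t_n are pairwise distinct, s₁,…,s_m are pairwise distinct, and t_i ≠ s_j for all i, j. If F satisfies all n+m equations of the deformed hypergeometric system with n even variables t, m odd variables s, and parameters (α, a, b, c) at (t,s), then the swapped function G(s,t) := F(t,s) satisfies all m+n equations of the deformed hypergeometric system with m even variables (the s's), n odd variables (the t's), and parameters (1/α, −αa, −αb, −αc) at (s,t). -/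
open Finset

/-- The deformed hypergeometric system with parameters `(α, a, b, c)` for a function
`F(t₁,…,t_n,s₁,…,s_m)` (first group of variables 'even', second 'odd'), at `(t,s)`. -/
def DeformedSystemAt (n m : ℕ) (α : ℝ) (a b c : ℂ)
    (F : (Fin n → ℂ) → (Fin m → ℂ) → ℂ) (t : Fin n → ℂ) (s : Fin m → ℂ) : Prop :=
  (∀ i : Fin n,
    t i * (1 - t i) * pdT (pdT F i) i t s + (c - (a + b + 1) * t i) * pdT F i t s
      - a * b * F t s
      + (1 / (α : ℂ)) * ∑ k ∈ univ.filter (fun k => k ≠ i),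
          t k / (t i - t k) * ((1 - t i) * pdT F i t s - (1 - t k) * pdT F k t s)
      - ∑ k : Fin m, s k / (t i - s k) *
          ((1 - t i) * pdT F i t s + (1 / (α : ℂ)) * (1 - s k) * pdS F k t s) = 0)
  ∧ (∀ j : Fin m,
    -(1 / (α : ℂ)) * s j * (1 - s j) * pdS (pdS F j) j t s
      + (c - (a + b + 1 - (1 + 1 / (α : ℂ))) * s j) * pdS F j t s
      + (α : ℂ) * a * b * F t s
      - ∑ k ∈ univ.filter (fun k => k ≠ j),
          s k / (s j - s k) * ((1 - s j) * pdS F j t s - (1 - s k) * pdS F k t s)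
      + ∑ k : Fin n, t k / (s j - t k) *
          ((1 / (α : ℂ)) * (1 - s j) * pdS F j t s + (1 - t k) * pdT F k t s) = 0)

/-- duality: if `F` satisfies the deformed hypergeometric system with `n`
even and `m` odd variables and parameters `(α, a, b, c)` at `(t,s)`, then the swapped
function `G(s,t) = F(t,s)` satisfies the system with `m` even and `n` odd variables and
parameters `(1/α, -αa, -αb, -αc)` at `(s,t)`. -/
theorem stmt13 (n m : ℕ) (α : ℝ) (hα : 0 < α) (a b c : ℂ)
    (F : (Fin n → ℂ) → (Fin m → ℂ) → ℂ) (t : Fin n → ℂ) (s : Fin m → ℂ)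
    (hdiff : ContDiffAt ℂ 2 (fun p : (Fin n → ℂ) × (Fin m → ℂ) => F p.1 p.2) (t, s))
    (ht : Function.Injective t) (hs : Function.Injective s)
    (hts : ∀ i j, t i ≠ s j)
    (hsys : DeformedSystemAt n m α a b c F t s) :
    DeformedSystemAt m n (1 / α) (-(α : ℂ) * a) (-(α : ℂ) * b) (-(α : ℂ) * c)
      (fun s' t' => F t' s') s t := by
  obtain ⟨he, ho⟩ := hsys
  have hα0 : (α : ℂ) ≠ 0 := by exact_mod_cast hα.ne'
  have hc : ((1 / α : ℝ) : ℂ) = 1 / (α : ℂ) := by push_cast; ring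
  have hmul : (α : ℂ) * (1 / (α : ℂ)) = 1 := by field_simp
  have key1 : ∀ d A A' B B' : ℂ,
      d * (A * A' + (α : ℂ) * B * B') = (α : ℂ) * (d * (1 / (α : ℂ) * A * A' + B * B')) := by
    intro d A A' B B'; linear_combination (-(d * A * A')) * hmul
  have key2 : ∀ d A A' B B' : ℂ,
      d * ((α : ℂ) * A * A' + B * B') = (α : ℂ) * (d * (A * A' + 1 / (α : ℂ) * B * B')) := by
    intro d A A' B B'; linear_combination (-(d * B * B')) * hmul
  constructor
  · intro j
    have h := ho j
    have e1 : pdT (pdT (fun s' t' => F t' s') j) j s t = pdS (pdS F j) j t s := rfl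
    have e2 : ∀ k, pdT (fun s' t' => F t' s') k s t = pdS F k t s := fun _ => rfl
    have e3 : ∀ k, pdS (fun s' t' => F t' s') k s t = pdT F k t s := fun _ => rfl
    simp only [e1, e2, e3, hc, one_div_one_div]
    have hsum : (∑ k : Fin n, t k / (s j - t k) *
          ((1 - s j) * pdS F j t s + (α : ℂ) * (1 - t k) * pdT F k t s))
        = (α : ℂ) * ∑ k : Fin n, t k / (s j - t k) *
          (1 / (α : ℂ) * (1 - s j) * pdS F j t s + (1 - t k) * pdT F k t s) := by
      rw [Finset.mul_sum]
      exact Finset.sum_congr rfl fun k _ => key1 _ _ _ _ _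
    rw [hsum]
    linear_combination (-(α : ℂ)) * h
      - (s j * (1 - s j) * pdS (pdS F j) j t s - s j * pdS F j t s) * hmul
  · intro i
    have h := he i
    have e1 : pdS (pdS (fun s' t' => F t' s') i) i s t = pdT (pdT F i) i t s := rfl
    have e2 : ∀ k, pdT (fun s' t' => F t' s') k s t = pdS F k t s := fun _ => rfl
    have e3 : ∀ k, pdS (fun s' t' => F t' s') k s t = pdT F k t s := fun _ => rfl
    simp only [e1, e2, e3, hc, one_div_one_div]
    have hsum : (∑ k : Fin m, s k / (t i - s k) *
          ((α : ℂ) * (1 - t i) * pdT F i t s + (1 - s k) * pdS F k t s))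
        = (α : ℂ) * ∑ k : Fin m, s k / (t i - s k) *
          ((1 - t i) * pdT F i t s + 1 / (α : ℂ) * (1 - s k) * pdS F k t s) := by
      rw [Finset.mul_sum]
      exact Finset.sum_congr rfl fun k _ => key2 _ _ _ _ _
    rw [hsum]
    linear_combination (-(α : ℂ)) * h + ((α : ℂ) * a * b * F t s) * hmul
      + (∑ k ∈ univ.filter (fun k => k ≠ i),
          t k / (t i - t k) * ((1 - t i) * pdT F i t s - (1 - t k) * pdT F k t s)) * hmul
end

section
/- Let n, m ≥ 0 be integers, α > 0 real, and a ∈ ℂ. The function F(t,s) = ∏_{i=1}^n (1−t_i)^{−a} · ∏_{j=1}^m (1−s_j)^{αa} (principal branch powers, defined for all t_i, s_j ∈ ℂ∖[1,∞)) satisfies: (1−t_i)∂F/∂t_i = aF for each 1 ≤ i ≤ n; (1−s_j)∂F/∂s_j = −αaF for each 1 ≤ j ≤ m; the cancellation condition ∂F/∂t_i + (1/α)∂F/∂s_j = 0 at every point with t_i = s_j; and F(0,…,0) = 1. Moreover, F is the unique function analytic on a neighborhood of the origin in ℂ^{n+m} satisfying these first-order equations together with F(0,…,0) = 1. -/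
open Finset

/-- `₁SF₀^{(α)}(a;t,s) = ∏ᵢ (1-tᵢ)^{-a} ∏ⱼ (1-sⱼ)^{αa}`, principal branch powers. -/
noncomputable def oneSF0 (n m : ℕ) (α : ℝ) (a : ℂ)
    (t : Fin n → ℂ) (s : Fin m → ℂ) : ℂ :=
  (∏ i, (1 - t i) ^ (-a)) * ∏ j, (1 - s j) ^ ((α : ℂ) * a)

lemma slitOne_mem {z : ℂ} (hz : z ∈ slitOne) : (1 - z) ∈ Complex.slitPlane := by
  rcases hz with h | h
  · right; simpa [Complex.sub_im] using h
  · left; simp only [Complex.sub_re, Complex.one_re]; linarith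

lemma slitOne_ne {z : ℂ} (hz : z ∈ slitOne) : (1 - z) ≠ 0 :=
  Complex.slitPlane_ne_zero (slitOne_mem hz)

lemma small_slit {w : ℂ} (hw : ‖w‖ < 1) : (1 - w) ∈ Complex.slitPlane := by
  left
  simp only [Complex.sub_re, Complex.one_re]
  have h := Complex.abs_re_le_norm w
  have := (abs_le.mp h).2
  linarith

lemma hasDerivAt_one_sub_cpow (c : ℂ) {z : ℂ} (hz : (1 - z) ∈ Complex.slitPlane) :
    HasDerivAt (fun w : ℂ => (1 - w) ^ c) (-(c * (1 - z) ^ (c - 1))) z := by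
  have h1 : HasDerivAt (fun w : ℂ => 1 - w) (-1) z := (hasDerivAt_id z).const_sub 1
  simpa using h1.cpow_const hz

lemma prod_one_sub_update {n : ℕ} (t : Fin n → ℂ) (i : Fin n) (z c : ℂ) :
    (∏ k, (1 - Function.update t i z k) ^ c)
      = (1 - z) ^ c * ∏ k ∈ Finset.univ.erase i, (1 - t k) ^ c := by
  rw [← Finset.mul_prod_erase Finset.univ _ (Finset.mem_univ i)]
  congr 1
  · simp
  · exact Finset.prod_congr rfl fun k hk => by
      rw [Function.update_of_ne (Finset.ne_of_mem_erase hk)]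

lemma pdT_oneSF0 (n m : ℕ) (α : ℝ) (a : ℂ) (t : Fin n → ℂ) (s : Fin m → ℂ)
    (i : Fin n) (hi : (1 - t i) ∈ Complex.slitPlane) :
    pdT (oneSF0 n m α a) i t s = a * (1 - t i)⁻¹ * oneSF0 n m α a t s := by
  have h0 : (1 - t i) ≠ 0 := Complex.slitPlane_ne_zero hi
  set C := (∏ k ∈ Finset.univ.erase i, (1 - t k) ^ (-a)) * ∏ j, (1 - s j) ^ ((α:ℂ) * a) with hC
  have heq : (fun z => oneSF0 n m α a (Function.update t i z) s)
      = fun z => (1 - z) ^ (-a) * C := by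
    funext z
    unfold oneSF0
    rw [prod_one_sub_update, hC]
    ring
  have hd : HasDerivAt (fun z => oneSF0 n m α a (Function.update t i z) s)
      (-(-a * (1 - t i) ^ (-a - 1)) * C) (t i) := by
    rw [heq]
    exact (hasDerivAt_one_sub_cpow (-a) hi).mul_const C
  have hF : oneSF0 n m α a t s = (1 - t i) ^ (-a) * C := by
    have := congrFun heq (t i)
    simpa [Function.update_eq_self] using this
  rw [pdT, hd.deriv, hF, Complex.cpow_sub _ _ h0, Complex.cpow_one]
  ring

lemma pdS_oneSF0 (n m : ℕ) (α : ℝ) (a : ℂ) (t : Fin n → ℂ) (s : Fin m → ℂ)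
    (j : Fin m) (hj : (1 - s j) ∈ Complex.slitPlane) :
    pdS (oneSF0 n m α a) j t s = -((α:ℂ) * a) * (1 - s j)⁻¹ * oneSF0 n m α a t s := by
  have h0 : (1 - s j) ≠ 0 := Complex.slitPlane_ne_zero hj
  set C := (∏ i, (1 - t i) ^ (-a)) * ∏ k ∈ Finset.univ.erase j, (1 - s k) ^ ((α:ℂ) * a) with hC
  have heq : (fun z => oneSF0 n m α a t (Function.update s j z))
      = fun z => (1 - z) ^ ((α:ℂ) * a) * C := by
    funext z
    unfold oneSF0
    rw [prod_one_sub_update, hC]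
    ring
  have hd : HasDerivAt (fun z => oneSF0 n m α a t (Function.update s j z))
      (-(((α:ℂ) * a) * (1 - s j) ^ ((α:ℂ) * a - 1)) * C) (s j) := by
    rw [heq]
    exact (hasDerivAt_one_sub_cpow ((α:ℂ) * a) hj).mul_const C
  have hF : oneSF0 n m α a t s = (1 - s j) ^ ((α:ℂ) * a) * C := by
    have := congrFun heq (s j)
    simpa [Function.update_eq_self] using this
  rw [pdS, hd.deriv, hF, Complex.cpow_sub _ _ h0, Complex.cpow_one]
  ring

lemma differentiableAt_finset_prod {E : Type*} [NormedAddCommGroup E] [NormedSpace ℂ E]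
    {ι : Type*} [DecidableEq ι] {u : Finset ι} {g : ι → E → ℂ} {x : E}
    (h : ∀ i ∈ u, DifferentiableAt ℂ (g i) x) :
    DifferentiableAt ℂ (fun y => ∏ i ∈ u, g i y) x := by
  classical
  induction u using Finset.induction with
  | empty => simp only [Finset.prod_empty]; exact differentiableAt_const (1 : ℂ)
  | @insert i u hni ih =>
    simp_rw [Finset.prod_insert hni]
    exact (h i (Finset.mem_insert_self i u)).mul
      (ih fun k hk => h k (Finset.mem_insert_of_mem hk))

/-- the product `F(t,s) = ∏ (1-tᵢ)^{-a} ∏ (1-sⱼ)^{αa}` satisfies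
`(1-tᵢ)∂F/∂tᵢ = aF`, `(1-sⱼ)∂F/∂sⱼ = -αaF`, the cancellation condition at `tᵢ = sⱼ`, and
`F(0,…,0) = 1`; moreover it is the unique analytic function near the origin with these
properties. -/
theorem stmt14 (n m : ℕ) (α : ℝ) (hα : 0 < α) (a : ℂ) :
    (∀ (t : Fin n → ℂ) (s : Fin m → ℂ), (∀ i, t i ∈ slitOne) → (∀ j, s j ∈ slitOne) →
      ∀ i, (1 - t i) * pdT (oneSF0 n m α a) i t s = a * oneSF0 n m α a t s)
    ∧ (∀ (t : Fin n → ℂ) (s : Fin m → ℂ), (∀ i, t i ∈ slitOne) → (∀ j, s j ∈ slitOne) →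
      ∀ j, (1 - s j) * pdS (oneSF0 n m α a) j t s = -(α : ℂ) * a * oneSF0 n m α a t s)
    ∧ (∀ (t : Fin n → ℂ) (s : Fin m → ℂ), (∀ i, t i ∈ slitOne) → (∀ j, s j ∈ slitOne) →
      ∀ i j, t i = s j →
        pdT (oneSF0 n m α a) i t s + (1 / (α : ℂ)) * pdS (oneSF0 n m α a) j t s = 0)
    ∧ oneSF0 n m α a 0 0 = 1
    ∧ (∀ (U : Set ((Fin n → ℂ) × (Fin m → ℂ))), IsOpen U → (0, 0) ∈ U →
      ∀ G : (Fin n → ℂ) → (Fin m → ℂ) → ℂ,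
        AnalyticOnNhd ℂ (fun p => G p.1 p.2) U →
        (∀ t s, (t, s) ∈ U → ∀ i, (1 - t i) * pdT G i t s = a * G t s) →
        (∀ t s, (t, s) ∈ U → ∀ j, (1 - s j) * pdS G j t s = -(α : ℂ) * a * G t s) →
        G 0 0 = 1 →
        ∃ V : Set ((Fin n → ℂ) × (Fin m → ℂ)), IsOpen V ∧ (0, 0) ∈ V ∧
          ∀ p ∈ V, G p.1 p.2 = oneSF0 n m α a p.1 p.2) := by
  refine ⟨?_, ?_, ?_, ?_, ?_⟩
  · intro t s ht hs i
    rw [pdT_oneSF0 n m α a t s i (slitOne_mem (ht i))]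
    have h0 : (1 - t i) ≠ 0 := slitOne_ne (ht i)
    field_simp
  · intro t s ht hs j
    rw [pdS_oneSF0 n m α a t s j (slitOne_mem (hs j))]
    have h0 : (1 - s j) ≠ 0 := slitOne_ne (hs j)
    field_simp
  · intro t s ht hs i j hij
    rw [pdT_oneSF0 n m α a t s i (slitOne_mem (ht i)),
      pdS_oneSF0 n m α a t s j (slitOne_mem (hs j)), hij]
    have hα0 : (α : ℂ) ≠ 0 := by
      exact_mod_cast (ne_of_gt hα)
    have hα1 : (1/(α:ℂ)) * -((α:ℂ)*a) = -a := by field_simp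
    linear_combination (1 - s j)⁻¹ * oneSF0 n m α a t s * hα1
  · simp [oneSF0]
  · intro U hU hU0 G hGan hGt hGs hG00
    obtain ⟨r, hrpos, hball⟩ := Metric.isOpen_iff.mp hU (0,0) hU0
    set r' : ℝ := min r (1/2) with hr'def
    have hr'pos : 0 < r' := lt_min hrpos (by norm_num)
    have h00V : ((0,0) : (Fin n → ℂ) × (Fin m → ℂ)) ∈ Metric.ball ((0,0) : (Fin n → ℂ) × (Fin m → ℂ)) r' :=
      Metric.mem_ball_self hr'pos
    refine ⟨Metric.ball (0,0) r', Metric.isOpen_ball, h00V, ?_⟩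
    have hVU : Metric.ball ((0,0) : (Fin n → ℂ) × (Fin m → ℂ)) r' ⊆ U :=
      fun q hq => hball (Metric.ball_subset_ball (min_le_left _ _) hq)
    have hnorm : ∀ p : (Fin n → ℂ) × (Fin m → ℂ), p ∈ Metric.ball ((0,0) : (Fin n → ℂ) × (Fin m → ℂ)) r' →
        (∀ i, ‖p.1 i‖ < 1) ∧ (∀ j, ‖p.2 j‖ < 1) := by
      intro p hp
      have hpn : ‖p‖ < r' := by
        have h0 : ((0,0) : (Fin n → ℂ) × (Fin m → ℂ)) = 0 := rfl
        rw [h0, Metric.mem_ball, dist_zero_right] at hp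
        exact hp
      have hr'le : r' ≤ 1/2 := min_le_right _ _
      constructor
      · intro i
        calc ‖p.1 i‖ ≤ ‖p.1‖ := norm_le_pi_norm p.1 i
          _ ≤ ‖p‖ := norm_fst_le p
          _ < 1 := by linarith
      · intro j
        calc ‖p.2 j‖ ≤ ‖p.2‖ := norm_le_pi_norm p.2 j
          _ ≤ ‖p‖ := norm_snd_le p
          _ < 1 := by linarith
    set A : (Fin n → ℂ) → ℂ := fun t => ∏ i, (1 - t i) ^ a with hA
    set B : (Fin m → ℂ) → ℂ := fun s => ∏ j, (1 - s j) ^ (-((α:ℂ) * a)) with hB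
    set Φ : ((Fin n → ℂ) × (Fin m → ℂ)) → ℂ := fun p => G p.1 p.2 * (A p.1 * B p.2) with hΦ
    have hdiffΦ : ∀ q ∈ Metric.ball ((0,0) : (Fin n → ℂ) × (Fin m → ℂ)) r', DifferentiableAt ℂ Φ q := by
      intro q hq
      have hG : DifferentiableAt ℂ (fun p : (Fin n → ℂ) × (Fin m → ℂ) => G p.1 p.2) q :=
        (hGan q (hVU hq)).differentiableAt
      have hA' : DifferentiableAt ℂ (fun p : (Fin n → ℂ) × (Fin m → ℂ) => A p.1) q := by
        have key : DifferentiableAt ℂ (fun p : (Fin n → ℂ) × (Fin m → ℂ) => ∏ i, (1 - p.1 i) ^ a) q := by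
          apply differentiableAt_finset_prod
          intro i _
          have hb : DifferentiableAt ℂ (fun p : (Fin n → ℂ) × (Fin m → ℂ) => 1 - p.1 i) q :=
            (differentiableAt_const (1:ℂ)).sub ((differentiable_pi.mp differentiable_fst i).differentiableAt)
          exact hb.cpow (differentiableAt_const a) (small_slit ((hnorm q hq).1 i))
        simpa [hA] using key
      have hB' : DifferentiableAt ℂ (fun p : (Fin n → ℂ) × (Fin m → ℂ) => B p.2) q := by
        have key : DifferentiableAt ℂ (fun p : (Fin n → ℂ) × (Fin m → ℂ) => ∏ j, (1 - p.2 j) ^ (-((α:ℂ) * a))) q := by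
          apply differentiableAt_finset_prod
          intro j _
          have hb : DifferentiableAt ℂ (fun p : (Fin n → ℂ) × (Fin m → ℂ) => 1 - p.2 j) q :=
            (differentiableAt_const (1:ℂ)).sub ((differentiable_pi.mp differentiable_snd j).differentiableAt)
          exact hb.cpow (differentiableAt_const (-((α:ℂ) * a))) (small_slit ((hnorm q hq).2 j))
        simpa [hB] using key
      exact hG.mul (hA'.mul hB')
    have hfderiv0 : ∀ p ∈ Metric.ball ((0,0) : (Fin n → ℂ) × (Fin m → ℂ)) r', fderiv ℂ Φ p = 0 := by
      intro p hp
      have hGdiff : DifferentiableAt ℂ (fun q : (Fin n → ℂ) × (Fin m → ℂ) => G q.1 q.2) p :=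
        (hGan p (hVU hp)).differentiableAt
      have hT : ∀ i : Fin n,
          fderiv ℂ Φ p ((Pi.single i 1 : Fin n → ℂ), (0 : Fin m → ℂ)) = 0 := by
        intro i
        have hsl : (1 - p.1 i) ∈ Complex.slitPlane := small_slit ((hnorm p hp).1 i)
        have hne : (1 - p.1 i) ≠ 0 := Complex.slitPlane_ne_zero hsl
        have hψ : HasDerivAt (fun z => ((Function.update p.1 i z : Fin n → ℂ), p.2))
            (((Pi.single i 1 : Fin n → ℂ), (0 : Fin m → ℂ))) (p.1 i) := by
          have heq : (fun z => ((Function.update p.1 i z : Fin n → ℂ), p.2))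
              = fun z => ((Function.update p.1 i 0 + z • (Pi.single i 1 : Fin n → ℂ)), p.2) := by
            funext z
            refine Prod.ext ?_ rfl
            funext k
            by_cases hk : k = i
            · subst hk; simp
            · simp [Function.update_of_ne hk, Pi.single_eq_of_ne hk]
          rw [heq]
          have h1 : HasDerivAt (fun z : ℂ => Function.update p.1 i 0 + z • (Pi.single i 1 : Fin n → ℂ))
              ((Pi.single i 1 : Fin n → ℂ)) (p.1 i) := by
            simpa using ((hasDerivAt_id (p.1 i)).smul_const (Pi.single i 1 : Fin n → ℂ)).const_add
              (Function.update p.1 i 0)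
          exact h1.prodMk (hasDerivAt_const (p.1 i) p.2)
        have hψp : ((Function.update p.1 i (p.1 i) : Fin n → ℂ), p.2) = p := by
          rw [Function.update_eq_self]
        have hF' : HasFDerivAt Φ (fderiv ℂ Φ p) ((Function.update p.1 i (p.1 i) : Fin n → ℂ), p.2) := by
          rw [hψp]; exact (hdiffΦ p hp).hasFDerivAt
        have hcomp : HasDerivAt (fun z => Φ ((Function.update p.1 i z : Fin n → ℂ), p.2))
            (fderiv ℂ Φ p ((Pi.single i 1 : Fin n → ℂ), (0 : Fin m → ℂ))) (p.1 i) := by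
          have := hF'.comp_hasDerivAt (p.1 i) hψ; exact this
        have hG' : HasFDerivAt (fun q : (Fin n → ℂ) × (Fin m → ℂ) => G q.1 q.2)
            (fderiv ℂ (fun q : (Fin n → ℂ) × (Fin m → ℂ) => G q.1 q.2) p)
            ((Function.update p.1 i (p.1 i) : Fin n → ℂ), p.2) := by
          rw [hψp]; exact hGdiff.hasFDerivAt
        have h2 := hG'.comp_hasDerivAt (p.1 i) hψ
        have h3 : pdT G i p.1 p.2
            = fderiv ℂ (fun q : (Fin n → ℂ) × (Fin m → ℂ) => G q.1 q.2) p
              ((Pi.single i 1 : Fin n → ℂ), (0 : Fin m → ℂ)) := by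
          rw [pdT]; exact h2.deriv
        have hg : HasDerivAt (fun z => G (Function.update p.1 i z) p.2)
            (pdT G i p.1 p.2) (p.1 i) := by
          rw [h3]; exact h2
        have hODE := hGt p.1 p.2 (hVU hp) i
        set K := (∏ k ∈ Finset.univ.erase i, (1 - p.1 k) ^ a) * B p.2 with hK
        have heq2 : (fun z => Φ ((Function.update p.1 i z : Fin n → ℂ), p.2))
            = fun z => (G (Function.update p.1 i z) p.2) * ((1 - z) ^ a * K) := by
          funext z
          simp only [hΦ, hA, hK]
          rw [prod_one_sub_update]
          ring
        have hv : HasDerivAt (fun z : ℂ => (1 - z) ^ a * K)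
            (-(a * (1 - p.1 i) ^ (a - 1)) * K) (p.1 i) :=
          (hasDerivAt_one_sub_cpow a hsl).mul_const K
        have hH := hg.mul hv
        have hval : pdT G i p.1 p.2 * ((1 - p.1 i) ^ a * K)
            + G (Function.update p.1 i (p.1 i)) p.2 * (-(a * (1 - p.1 i) ^ (a - 1)) * K) = 0 := by
          rw [Function.update_eq_self]
          have hxa : (1 - p.1 i) ^ a = (1 - p.1 i) ^ (a - 1) * (1 - p.1 i) := by
            conv_lhs => rw [show a = (a - 1) + 1 by ring]
            rw [Complex.cpow_add _ _ hne, Complex.cpow_one]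
          rw [hxa]
          linear_combination ((1 - p.1 i) ^ (a - 1) * K) * hODE
        have hH0 : HasDerivAt (fun z => Φ ((Function.update p.1 i z : Fin n → ℂ), p.2)) 0 (p.1 i) := by
          rw [heq2, ← hval]
          exact hH
        exact hcomp.unique hH0
      have hS : ∀ j : Fin m,
          fderiv ℂ Φ p ((0 : Fin n → ℂ), (Pi.single j 1 : Fin m → ℂ)) = 0 := by
        intro j
        have hsl : (1 - p.2 j) ∈ Complex.slitPlane := small_slit ((hnorm p hp).2 j)
        have hne : (1 - p.2 j) ≠ 0 := Complex.slitPlane_ne_zero hsl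
        have hψ : HasDerivAt (fun z => (p.1, (Function.update p.2 j z : Fin m → ℂ)))
            (((0 : Fin n → ℂ), (Pi.single j 1 : Fin m → ℂ))) (p.2 j) := by
          have heq : (fun z => (p.1, (Function.update p.2 j z : Fin m → ℂ)))
              = fun z => (p.1, (Function.update p.2 j 0 + z • (Pi.single j 1 : Fin m → ℂ))) := by
            funext z
            refine Prod.ext rfl ?_
            funext k
            by_cases hk : k = j
            · subst hk; simp
            · simp [Function.update_of_ne hk, Pi.single_eq_of_ne hk]
          rw [heq]
          have h1 : HasDerivAt (fun z : ℂ => Function.update p.2 j 0 + z • (Pi.single j 1 : Fin m → ℂ))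
              ((Pi.single j 1 : Fin m → ℂ)) (p.2 j) := by
            simpa using ((hasDerivAt_id (p.2 j)).smul_const (Pi.single j 1 : Fin m → ℂ)).const_add
              (Function.update p.2 j 0)
          exact (hasDerivAt_const (p.2 j) p.1).prodMk h1
        have hψp : (p.1, (Function.update p.2 j (p.2 j) : Fin m → ℂ)) = p := by
          rw [Function.update_eq_self]
        have hF' : HasFDerivAt Φ (fderiv ℂ Φ p) (p.1, (Function.update p.2 j (p.2 j) : Fin m → ℂ)) := by
          rw [hψp]; exact (hdiffΦ p hp).hasFDerivAt
        have hcomp : HasDerivAt (fun z => Φ (p.1, (Function.update p.2 j z : Fin m → ℂ)))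
            (fderiv ℂ Φ p ((0 : Fin n → ℂ), (Pi.single j 1 : Fin m → ℂ))) (p.2 j) := by
          have := hF'.comp_hasDerivAt (p.2 j) hψ; exact this
        have hG' : HasFDerivAt (fun q : (Fin n → ℂ) × (Fin m → ℂ) => G q.1 q.2)
            (fderiv ℂ (fun q : (Fin n → ℂ) × (Fin m → ℂ) => G q.1 q.2) p)
            (p.1, (Function.update p.2 j (p.2 j) : Fin m → ℂ)) := by
          rw [hψp]; exact hGdiff.hasFDerivAt
        have h2 := hG'.comp_hasDerivAt (p.2 j) hψ
        have h3 : pdS G j p.1 p.2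
            = fderiv ℂ (fun q : (Fin n → ℂ) × (Fin m → ℂ) => G q.1 q.2) p
              ((0 : Fin n → ℂ), (Pi.single j 1 : Fin m → ℂ)) := by
          rw [pdS]; exact h2.deriv
        have hg : HasDerivAt (fun z => G p.1 (Function.update p.2 j z))
            (pdS G j p.1 p.2) (p.2 j) := by
          rw [h3]; exact h2
        have hODE := hGs p.1 p.2 (hVU hp) j
        set K := A p.1 * ∏ k ∈ Finset.univ.erase j, (1 - p.2 k) ^ (-((α:ℂ) * a)) with hK
        have heq2 : (fun z => Φ (p.1, (Function.update p.2 j z : Fin m → ℂ)))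
            = fun z => (G p.1 (Function.update p.2 j z)) * ((1 - z) ^ (-((α:ℂ) * a)) * K) := by
          funext z
          simp only [hΦ, hB, hK]
          rw [prod_one_sub_update]
          ring
        have hv : HasDerivAt (fun z : ℂ => (1 - z) ^ (-((α:ℂ) * a)) * K)
            (-((-((α:ℂ) * a)) * (1 - p.2 j) ^ ((-((α:ℂ) * a)) - 1)) * K) (p.2 j) :=
          (hasDerivAt_one_sub_cpow (-((α:ℂ) * a)) hsl).mul_const K
        have hH := hg.mul hv
        have hval : pdS G j p.1 p.2 * ((1 - p.2 j) ^ (-((α:ℂ) * a)) * K)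
            + G p.1 (Function.update p.2 j (p.2 j))
              * (-((-((α:ℂ) * a)) * (1 - p.2 j) ^ ((-((α:ℂ) * a)) - 1)) * K) = 0 := by
          rw [Function.update_eq_self]
          have hxa : (1 - p.2 j) ^ (-((α:ℂ) * a))
              = (1 - p.2 j) ^ ((-((α:ℂ) * a)) - 1) * (1 - p.2 j) := by
            conv_lhs => rw [show -((α:ℂ) * a) = (-((α:ℂ) * a) - 1) + 1 by ring]
            rw [Complex.cpow_add _ _ hne, Complex.cpow_one]
          rw [hxa]
          linear_combination ((1 - p.2 j) ^ ((-((α:ℂ) * a)) - 1) * K) * hODE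
        have hH0 : HasDerivAt (fun z => Φ (p.1, (Function.update p.2 j z : Fin m → ℂ))) 0 (p.2 j) := by
          rw [heq2, ← hval]
          exact hH
        exact hcomp.unique hH0
      apply ContinuousLinearMap.ext
      intro w
      have hw : w = (∑ i, ((Pi.single i (w.1 i) : Fin n → ℂ), (0 : Fin m → ℂ)))
          + ∑ j, ((0 : Fin n → ℂ), (Pi.single j (w.2 j) : Fin m → ℂ)) := by
        refine Prod.ext ?_ ?_ <;>
          simp [Prod.fst_sum, Prod.snd_sum, Finset.univ_sum_single]
      have h1 : ∀ i : Fin n,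
          fderiv ℂ Φ p ((Pi.single i (w.1 i) : Fin n → ℂ), (0 : Fin m → ℂ)) = 0 := by
        intro i
        have hsm : ((Pi.single i (w.1 i) : Fin n → ℂ), (0 : Fin m → ℂ))
            = w.1 i • ((Pi.single i 1 : Fin n → ℂ), (0 : Fin m → ℂ)) := by
          refine Prod.ext ?_ (by simp)
          funext k
          by_cases hk : k = i
          · subst hk; simp
          · simp [Pi.single_eq_of_ne hk]
        rw [hsm, map_smul, hT i, smul_zero]
      have h2 : ∀ j : Fin m,
          fderiv ℂ Φ p ((0 : Fin n → ℂ), (Pi.single j (w.2 j) : Fin m → ℂ)) = 0 := by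
        intro j
        have hsm : ((0 : Fin n → ℂ), (Pi.single j (w.2 j) : Fin m → ℂ))
            = w.2 j • ((0 : Fin n → ℂ), (Pi.single j 1 : Fin m → ℂ)) := by
          refine Prod.ext (by simp) ?_
          funext k
          by_cases hk : k = j
          · subst hk; simp
          · simp [Pi.single_eq_of_ne hk]
        rw [hsm, map_smul, hS j, smul_zero]
      rw [hw, map_add, map_sum, map_sum, Finset.sum_eq_zero (fun i _ => h1 i),
        Finset.sum_eq_zero (fun j _ => h2 j), add_zero]
      simp
    have hdiffOn : DifferentiableOn ℂ Φ (Metric.ball ((0,0) : (Fin n → ℂ) × (Fin m → ℂ)) r') :=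
      fun q hq => (hdiffΦ q hq).differentiableWithinAt
    have hfw : ∀ q ∈ Metric.ball ((0,0) : (Fin n → ℂ) × (Fin m → ℂ)) r',
        fderivWithin ℂ Φ (Metric.ball ((0,0) : (Fin n → ℂ) × (Fin m → ℂ)) r') q = 0 := by
      intro q hq
      rw [fderivWithin_of_isOpen Metric.isOpen_ball hq]
      exact hfderiv0 q hq
    have hconv : Convex ℝ (Metric.ball ((0,0) : (Fin n → ℂ) × (Fin m → ℂ)) r') := convex_ball _ _
    have hΦ00 : Φ ((0,0) : (Fin n → ℂ) × (Fin m → ℂ)) = 1 := by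
      simp only [hΦ, hA, hB]
      simp [hG00]
    intro p hp
    have hΦp : Φ p = 1 := by
      rw [hconv.is_const_of_fderivWithin_eq_zero hdiffOn hfw hp h00V, hΦ00]
    simp only [hΦ, hA, hB] at hΦp
    have hAA : (∏ i, (1 - p.1 i) ^ a) * (∏ i, (1 - p.1 i) ^ (-a)) = 1 := by
      rw [← Finset.prod_mul_distrib]
      apply Finset.prod_eq_one
      intro i _
      have hne : (1 - p.1 i) ≠ 0 := Complex.slitPlane_ne_zero (small_slit ((hnorm p hp).1 i))
      rw [← Complex.cpow_add _ _ hne]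
      simp
    have hBB : (∏ j, (1 - p.2 j) ^ (-((α:ℂ) * a))) * (∏ j, (1 - p.2 j) ^ ((α:ℂ) * a)) = 1 := by
      rw [← Finset.prod_mul_distrib]
      apply Finset.prod_eq_one
      intro j _
      have hne : (1 - p.2 j) ≠ 0 := Complex.slitPlane_ne_zero (small_slit ((hnorm p hp).2 j))
      rw [← Complex.cpow_add _ _ hne]
      simp
    rw [oneSF0]
    linear_combination ((∏ i, (1 - p.1 i) ^ (-a)) * (∏ j, (1 - p.2 j) ^ ((α:ℂ) * a))) * hΦp
      - G p.1 p.2 * (∏ j, (1 - p.2 j) ^ (-((α:ℂ) * a))) * (∏ j, (1 - p.2 j) ^ ((α:ℂ) * a)) * hAA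
      - G p.1 p.2 * hBB
end

section
/- Let n, m ≥ 0 be integers, α > 0 real, a, b, c ∈ ℂ, and let 0 ≤ p ≤ n and 0 ≤ q ≤ m. Suppose F is analytic on an open polydisc around the origin in ℂ^{n+m} and satisfies every equation of the deformed hypergeometric system in the n+m variables (t₁,…,t_n, s₁,…,s_m) with parameters (α, a, b, c) at every point of the polydisc at which t₁,…,t_n are pairwise distinct, s₁,…,s_m are pairwise distinct, and t_i ≠ s_j for all i, j. Then the restricted function F_{p,q}(t₁,…,t_p, s₁,…,s_q) := F(t₁,…,t_p, 0,…,0, s₁,…,s_q, 0,…,0) satisfies every equation of the deformed hypergeometric system in the p+q variables (t₁,…,t_p, s₁,…,s_q) with the same parameters (α, a, b, c), at every point of the corresponding polydisc at which t₁,…,t_p, s₁,…,s_q are all nonzero, t₁,…,t_p are pairwise distinct, s₁,…,s_q are pairwise distinct, and t_i ≠ s_j for all i ≤ p, j ≤ q. -/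
open Finset

open Topology Filter

section Helpers

lemma deriv_slice_fst {n m : ℕ} (H : (Fin n → ℂ) × (Fin m → ℂ) → ℂ)
    (t : Fin n → ℂ) (s : Fin m → ℂ) (i : Fin n)
    (hd : DifferentiableAt ℂ H (t, s)) :
    deriv (fun z => H (Function.update t i z, s)) (t i)
      = fderiv ℂ H (t, s) (Pi.single i 1, 0) := by
  have hcurve : HasDerivAt (fun z => (Function.update t i z, s))
      ((Pi.single i 1 : Fin n → ℂ), (0 : Fin m → ℂ)) (t i) :=
    HasDerivAt.prodMk (hasDerivAt_update t i (t i)) (hasDerivAt_const _ _)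
  have hH : HasFDerivAt H (fderiv ℂ H (t, s)) (Function.update t i (t i), s) := by
    rw [Function.update_eq_self]; exact hd.hasFDerivAt
  exact (hH.comp_hasDerivAt (t i) hcurve).deriv

lemma deriv_slice_snd {n m : ℕ} (H : (Fin n → ℂ) × (Fin m → ℂ) → ℂ)
    (t : Fin n → ℂ) (s : Fin m → ℂ) (j : Fin m)
    (hd : DifferentiableAt ℂ H (t, s)) :
    deriv (fun z => H (t, Function.update s j z)) (s j)
      = fderiv ℂ H (t, s) (0, Pi.single j 1) := by
  have hcurve : HasDerivAt (fun z => (t, Function.update s j z))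
      ((0 : Fin n → ℂ), (Pi.single j 1 : Fin m → ℂ)) (s j) :=
    HasDerivAt.prodMk (hasDerivAt_const _ _) (hasDerivAt_update s j (s j))
  have hH : HasFDerivAt H (fderiv ℂ H (t, s)) (t, Function.update s j (s j)) := by
    rw [Function.update_eq_self]; exact hd.hasFDerivAt
  exact (hH.comp_hasDerivAt (s j) hcurve).deriv

/-- Extension of a function on `Fin p` to `Fin n` by zero. -/
noncomputable def extF {p n : ℕ} (hp : p ≤ n) (u : Fin p → ℂ) : Fin n → ℂ :=
  fun i => if h : (i : ℕ) < p then u ⟨(i : ℕ), h⟩ else 0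

lemma extF_update {p n : ℕ} (hp : p ≤ n) (u : Fin p → ℂ) (i : Fin p) (z : ℂ) :
    extF hp (Function.update u i z)
      = Function.update (extF hp u) ⟨(i : ℕ), lt_of_lt_of_le i.isLt hp⟩ z := by
  funext k
  simp only [extF, Function.update_apply]
  by_cases h : (k : ℕ) < p
  · simp only [dif_pos h]
    by_cases hk : (⟨(k : ℕ), h⟩ : Fin p) = i
    · have : k = (⟨(i : ℕ), lt_of_lt_of_le i.isLt hp⟩ : Fin n) := by
        apply Fin.ext; simpa [Fin.ext_iff] using hk
      simp [hk, this]
    · have : k ≠ (⟨(i : ℕ), lt_of_lt_of_le i.isLt hp⟩ : Fin n) := by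
        intro hkk; apply hk; apply Fin.ext; simpa [Fin.ext_iff] using hkk
      simp [hk, this, extF, h]
  · have : k ≠ (⟨(i : ℕ), lt_of_lt_of_le i.isLt hp⟩ : Fin n) := by
      intro hkk; exact h (by simp [hkk, i.isLt])
    simp [h, this]

lemma extF_apply {p n : ℕ} (hp : p ≤ n) (u : Fin p → ℂ) (i : Fin p) :
    extF hp u ⟨(i : ℕ), lt_of_lt_of_le i.isLt hp⟩ = u i := by
  simp [extF]

lemma extF_apply_zero {p n : ℕ} (hp : p ≤ n) (u : Fin p → ℂ) (k : Fin n)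
    (hk : ¬ ((k : ℕ) < p)) : extF hp u k = 0 := by
  simp [extF, hk]

section RestrictedDerivs
variable {n m p q : ℕ} (hp : p ≤ n) (hq : q ≤ m) (F : (Fin n → ℂ) → (Fin m → ℂ) → ℂ)

lemma pdT_ext (i : Fin p) (u : Fin p → ℂ) (v : Fin q → ℂ) :
    pdT (fun u v => F (extF hp u) (extF hq v)) i u v
      = pdT F ⟨(i : ℕ), lt_of_lt_of_le i.isLt hp⟩ (extF hp u) (extF hq v) := by
  show deriv (fun z => F (extF hp (Function.update u i z)) (extF hq v)) (u i) = _
  have h1 : (fun z => F (extF hp (Function.update u i z)) (extF hq v))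
      = fun z => F (Function.update (extF hp u) ⟨(i : ℕ), lt_of_lt_of_le i.isLt hp⟩ z)
          (extF hq v) := by
    funext z; rw [extF_update]
  rw [h1, show u i = extF hp u ⟨(i : ℕ), lt_of_lt_of_le i.isLt hp⟩ from (extF_apply hp u i).symm]
  rfl

lemma pdS_ext (j : Fin q) (u : Fin p → ℂ) (v : Fin q → ℂ) :
    pdS (fun u v => F (extF hp u) (extF hq v)) j u v
      = pdS F ⟨(j : ℕ), lt_of_lt_of_le j.isLt hq⟩ (extF hp u) (extF hq v) := by
  show deriv (fun z => F (extF hp u) (extF hq (Function.update v j z))) (v j) = _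
  have h1 : (fun z => F (extF hp u) (extF hq (Function.update v j z)))
      = fun z => F (extF hp u)
          (Function.update (extF hq v) ⟨(j : ℕ), lt_of_lt_of_le j.isLt hq⟩ z) := by
    funext z; rw [extF_update]
  rw [h1, show v j = extF hq v ⟨(j : ℕ), lt_of_lt_of_le j.isLt hq⟩ from (extF_apply hq v j).symm]
  rfl

lemma pdT2_ext (i : Fin p) (u : Fin p → ℂ) (v : Fin q → ℂ) :
    pdT (pdT (fun u v => F (extF hp u) (extF hq v)) i) i u v
      = pdT (pdT F ⟨(i : ℕ), lt_of_lt_of_le i.isLt hp⟩) ⟨(i : ℕ), lt_of_lt_of_le i.isLt hp⟩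
          (extF hp u) (extF hq v) := by
  show deriv (fun z => pdT (fun u v => F (extF hp u) (extF hq v)) i (Function.update u i z) v)
      (u i) = _
  have h1 : (fun z => pdT (fun u v => F (extF hp u) (extF hq v)) i (Function.update u i z) v)
      = fun z => pdT F ⟨(i : ℕ), lt_of_lt_of_le i.isLt hp⟩
          (Function.update (extF hp u) ⟨(i : ℕ), lt_of_lt_of_le i.isLt hp⟩ z) (extF hq v) := by
    funext z; rw [pdT_ext, extF_update]
  rw [h1, show u i = extF hp u ⟨(i : ℕ), lt_of_lt_of_le i.isLt hp⟩ from (extF_apply hp u i).symm]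
  rfl

lemma pdS2_ext (j : Fin q) (u : Fin p → ℂ) (v : Fin q → ℂ) :
    pdS (pdS (fun u v => F (extF hp u) (extF hq v)) j) j u v
      = pdS (pdS F ⟨(j : ℕ), lt_of_lt_of_le j.isLt hq⟩) ⟨(j : ℕ), lt_of_lt_of_le j.isLt hq⟩
          (extF hp u) (extF hq v) := by
  show deriv (fun z => pdS (fun u v => F (extF hp u) (extF hq v)) j u (Function.update v j z))
      (v j) = _
  have h1 : (fun z => pdS (fun u v => F (extF hp u) (extF hq v)) j u (Function.update v j z))
      = fun z => pdS F ⟨(j : ℕ), lt_of_lt_of_le j.isLt hq⟩ (extF hp u)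
          (Function.update (extF hq v) ⟨(j : ℕ), lt_of_lt_of_le j.isLt hq⟩ z) := by
    funext z; rw [pdS_ext, extF_update]
  rw [h1, show v j = extF hq v ⟨(j : ℕ), lt_of_lt_of_le j.isLt hq⟩ from (extF_apply hq v j).symm]
  rfl

end RestrictedDerivs

lemma sum_restrict_filter {p n : ℕ} (hp : p ≤ n) (f : Fin n → ℂ) (g : Fin p → ℂ)
    (hfg : ∀ k : Fin p, f ⟨(k : ℕ), lt_of_lt_of_le k.isLt hp⟩ = g k)
    (h0 : ∀ k : Fin n, ¬((k : ℕ) < p) → f k = 0)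
    (i : Fin p) :
    ∑ k ∈ univ.filter (fun k => k ≠ (⟨(i : ℕ), lt_of_lt_of_le i.isLt hp⟩ : Fin n)), f k
      = ∑ k ∈ univ.filter (fun k => k ≠ i), g k := by
  classical
  rw [← Finset.sum_subset
    (s₁ := univ.filter (fun k : Fin n =>
      (k ≠ (⟨(i : ℕ), lt_of_lt_of_le i.isLt hp⟩ : Fin n)) ∧ (k : ℕ) < p))
    (by intro x hx; simp only [mem_filter, mem_univ, true_and] at hx ⊢; exact hx.1)
    (by intro x hx1 hx2
        simp only [mem_filter, mem_univ, true_and] at hx1 hx2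
        exact h0 x (fun hlt => hx2 ⟨hx1, hlt⟩))]
  refine Finset.sum_bij' (fun k hk => (⟨(k : ℕ), ?_⟩ : Fin p)) (fun k hk => ⟨(k : ℕ), ?_⟩)
    ?_ ?_ ?_ ?_ ?_
  · simp only [mem_filter, mem_univ, true_and] at hk; exact hk.2
  · exact lt_of_lt_of_le k.isLt hp
  · intro k hk
    simp only [mem_filter, mem_univ, true_and] at hk ⊢
    intro hkk
    exact hk.1 (by apply Fin.ext; simpa [Fin.ext_iff] using hkk)
  · intro k hk
    simp only [mem_filter, mem_univ, true_and] at hk ⊢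
    refine ⟨fun hkk => hk ?_, k.isLt⟩
    apply Fin.ext; simpa [Fin.ext_iff] using hkk
  · intro k hk; apply Fin.ext; rfl
  · intro k hk; apply Fin.ext; rfl
  · intro k hk; rw [← hfg]

lemma sum_restrict_univ {q m : ℕ} (hq : q ≤ m) (f : Fin m → ℂ) (g : Fin q → ℂ)
    (hfg : ∀ k : Fin q, f ⟨(k : ℕ), lt_of_lt_of_le k.isLt hq⟩ = g k)
    (h0 : ∀ k : Fin m, ¬((k : ℕ) < q) → f k = 0) :
    ∑ k : Fin m, f k = ∑ k : Fin q, g k := by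
  classical
  rw [← Finset.sum_subset (s₁ := univ.filter (fun k : Fin m => (k : ℕ) < q))
    (by intro x _; exact mem_univ x)
    (by intro x hx1 hx2
        simp only [mem_filter, mem_univ, true_and] at hx2
        exact h0 x hx2)]
  refine Finset.sum_bij' (fun k hk => (⟨(k : ℕ), ?_⟩ : Fin q)) (fun k hk => ⟨(k : ℕ), ?_⟩)
    ?_ ?_ ?_ ?_ ?_
  · simp only [mem_filter, mem_univ, true_and] at hk; exact hk
  · exact lt_of_lt_of_le k.isLt hq
  · intro k hk; exact mem_univ _
  · intro k hk; simp only [mem_filter, mem_univ, true_and]; exact k.isLt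
  · intro k hk; apply Fin.ext; rfl
  · intro k hk; apply Fin.ext; rfl
  · intro k hk; rw [← hfg]

end Helpers

/-- if `F` is analytic on an open polydisc around the origin and satisfies the
deformed hypergeometric system in `n + m` variables there (at points with the required
distinctness), then restricting to the first `p ≤ n` even and `q ≤ m` odd variables (setting
the remaining variables to zero) yields a solution of the deformed hypergeometric system in
`p + q` variables with the same parameters, at points with all coordinates nonzero,
pairwise distinct within each group, and distinct across groups. -/
theorem stmt19 (n m p q : ℕ) (hp : p ≤ n) (hq : q ≤ m) (α : ℝ) (hα : 0 < α) (a b c : ℂ)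
    (r : ℝ) (hr : 0 < r)
    (F : (Fin n → ℂ) → (Fin m → ℂ) → ℂ)
    (hFa : AnalyticOnNhd ℂ (fun pt : (Fin n → ℂ) × (Fin m → ℂ) => F pt.1 pt.2)
      {pt | (∀ i, ‖pt.1 i‖ < r) ∧ (∀ j, ‖pt.2 j‖ < r)})
    (hFsys : ∀ (t : Fin n → ℂ) (s : Fin m → ℂ),
      (∀ i, ‖t i‖ < r) → (∀ j, ‖s j‖ < r) →
      Function.Injective t → Function.Injective s → (∀ i j, t i ≠ s j) →
      DeformedSystemAt n m α a b c F t s)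
    (t' : Fin p → ℂ) (s' : Fin q → ℂ)
    (ht'r : ∀ i, ‖t' i‖ < r) (hs'r : ∀ j, ‖s' j‖ < r)
    (ht'0 : ∀ i, t' i ≠ 0) (hs'0 : ∀ j, s' j ≠ 0)
    (ht' : Function.Injective t') (hs' : Function.Injective s')
    (hts : ∀ i j, t' i ≠ s' j) :
    DeformedSystemAt p q α a b c
      (fun u v => F (fun i => if h : (i : ℕ) < p then u ⟨(i : ℕ), h⟩ else 0)
        (fun j => if h : (j : ℕ) < q then v ⟨(j : ℕ), h⟩ else 0)) t' s' := by
  classical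
  have hα0 : (α : ℂ) ≠ 0 := by exact_mod_cast ne_of_gt hα
  set U : Set ((Fin n → ℂ) × (Fin m → ℂ)) :=
    {pt | (∀ i, ‖pt.1 i‖ < r) ∧ (∀ j, ‖pt.2 j‖ < r)} with hUdef
  have hUopen : IsOpen U := by
    have h1 : ∀ i : Fin n, IsOpen {pt : (Fin n → ℂ) × (Fin m → ℂ) | ‖pt.1 i‖ < r} :=
      fun i => isOpen_lt (continuous_norm.comp ((continuous_apply i).comp continuous_fst))
        continuous_const
    have h2 : ∀ j : Fin m, IsOpen {pt : (Fin n → ℂ) × (Fin m → ℂ) | ‖pt.2 j‖ < r} :=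
      fun j => isOpen_lt (continuous_norm.comp ((continuous_apply j).comp continuous_snd))
        continuous_const
    have hU2 : U = (⋂ i, {pt : (Fin n → ℂ) × (Fin m → ℂ) | ‖pt.1 i‖ < r})
        ∩ ⋂ j, {pt | ‖pt.2 j‖ < r} := by
      ext pt; simp [hUdef, Set.mem_iInter]
    rw [hU2]
    exact (isOpen_iInter_of_finite h1).inter (isOpen_iInter_of_finite h2)
  have hGa : AnalyticOnNhd ℂ (fun pt : (Fin n → ℂ) × (Fin m → ℂ) => F pt.1 pt.2) U := hFa
  -- first-order derivative functions and their analyticity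
  have hD1Ta : ∀ i : Fin n, AnalyticOnNhd ℂ
      (fun pt => fderiv ℂ (fun pt : (Fin n → ℂ) × (Fin m → ℂ) => F pt.1 pt.2) pt
        ((Pi.single i 1 : Fin n → ℂ), (0 : Fin m → ℂ))) U :=
    fun i => (ContinuousLinearMap.apply ℂ ℂ
      ((Pi.single i 1 : Fin n → ℂ), (0 : Fin m → ℂ))).comp_analyticOnNhd hGa.fderiv
  have hD1Sa : ∀ j : Fin m, AnalyticOnNhd ℂ
      (fun pt => fderiv ℂ (fun pt : (Fin n → ℂ) × (Fin m → ℂ) => F pt.1 pt.2) pt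
        ((0 : Fin n → ℂ), (Pi.single j 1 : Fin m → ℂ))) U :=
    fun j => (ContinuousLinearMap.apply ℂ ℂ
      ((0 : Fin n → ℂ), (Pi.single j 1 : Fin m → ℂ))).comp_analyticOnNhd hGa.fderiv
  have hD2Ta : ∀ i : Fin n, AnalyticOnNhd ℂ
      (fun pt => fderiv ℂ (fun pt => fderiv ℂ (fun pt : (Fin n → ℂ) × (Fin m → ℂ) => F pt.1 pt.2)
        pt ((Pi.single i 1 : Fin n → ℂ), (0 : Fin m → ℂ))) pt
        ((Pi.single i 1 : Fin n → ℂ), (0 : Fin m → ℂ))) U :=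
    fun i => (ContinuousLinearMap.apply ℂ ℂ
      ((Pi.single i 1 : Fin n → ℂ), (0 : Fin m → ℂ))).comp_analyticOnNhd (hD1Ta i).fderiv
  have hD2Sa : ∀ j : Fin m, AnalyticOnNhd ℂ
      (fun pt => fderiv ℂ (fun pt => fderiv ℂ (fun pt : (Fin n → ℂ) × (Fin m → ℂ) => F pt.1 pt.2)
        pt ((0 : Fin n → ℂ), (Pi.single j 1 : Fin m → ℂ))) pt
        ((0 : Fin n → ℂ), (Pi.single j 1 : Fin m → ℂ))) U :=
    fun j => (ContinuousLinearMap.apply ℂ ℂ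
      ((0 : Fin n → ℂ), (Pi.single j 1 : Fin m → ℂ))).comp_analyticOnNhd (hD1Sa j).fderiv
  -- identification of pdT/pdS with the analytic derivative functions on U
  have heT : ∀ pt ∈ U, ∀ i : Fin n, pdT F i pt.1 pt.2
      = fderiv ℂ (fun pt : (Fin n → ℂ) × (Fin m → ℂ) => F pt.1 pt.2) pt (Pi.single i 1, 0) :=
    fun pt hpt i => deriv_slice_fst _ pt.1 pt.2 i ((hGa pt hpt).differentiableAt)
  have heS : ∀ pt ∈ U, ∀ j : Fin m, pdS F j pt.1 pt.2
      = fderiv ℂ (fun pt : (Fin n → ℂ) × (Fin m → ℂ) => F pt.1 pt.2) pt (0, Pi.single j 1) :=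
    fun pt hpt j => deriv_slice_snd _ pt.1 pt.2 j ((hGa pt hpt).differentiableAt)
  have heT2 : ∀ pt ∈ U, ∀ i : Fin n, pdT (pdT F i) i pt.1 pt.2
      = fderiv ℂ (fun pt => fderiv ℂ (fun pt : (Fin n → ℂ) × (Fin m → ℂ) => F pt.1 pt.2) pt
          ((Pi.single i 1 : Fin n → ℂ), (0 : Fin m → ℂ))) pt (Pi.single i 1, 0) := by
    intro pt hpt i
    have hnb : ∀ᶠ z in 𝓝 (pt.1 i), (Function.update pt.1 i z, pt.2) ∈ U := by
      have hc : ContinuousAt (fun z => (Function.update pt.1 i z, pt.2)) (pt.1 i) :=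
        ((hasDerivAt_update pt.1 i (pt.1 i)).continuousAt).prodMk continuousAt_const
      have hmem : (Function.update pt.1 i (pt.1 i), pt.2) ∈ U := by
        rw [Function.update_eq_self]; exact hpt
      exact hc (hUopen.mem_nhds hmem)
    have heq : (fun z => pdT F i (Function.update pt.1 i z) pt.2)
        =ᶠ[𝓝 (pt.1 i)] (fun z => fderiv ℂ (fun pt : (Fin n → ℂ) × (Fin m → ℂ) => F pt.1 pt.2)
          (Function.update pt.1 i z, pt.2) (Pi.single i 1, 0)) :=
      hnb.mono fun z hz => heT _ hz i
    calc pdT (pdT F i) i pt.1 pt.2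
        = deriv (fun z => pdT F i (Function.update pt.1 i z) pt.2) (pt.1 i) := rfl
      _ = deriv (fun z => fderiv ℂ (fun pt : (Fin n → ℂ) × (Fin m → ℂ) => F pt.1 pt.2)
            (Function.update pt.1 i z, pt.2) (Pi.single i 1, 0)) (pt.1 i) := heq.deriv_eq
      _ = _ := deriv_slice_fst _ pt.1 pt.2 i (((hD1Ta i) pt hpt).differentiableAt)
  have heS2 : ∀ pt ∈ U, ∀ j : Fin m, pdS (pdS F j) j pt.1 pt.2
      = fderiv ℂ (fun pt => fderiv ℂ (fun pt : (Fin n → ℂ) × (Fin m → ℂ) => F pt.1 pt.2) pt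
          ((0 : Fin n → ℂ), (Pi.single j 1 : Fin m → ℂ))) pt (0, Pi.single j 1) := by
    intro pt hpt j
    have hnb : ∀ᶠ z in 𝓝 (pt.2 j), (pt.1, Function.update pt.2 j z) ∈ U := by
      have hc : ContinuousAt (fun z => (pt.1, Function.update pt.2 j z)) (pt.2 j) :=
        continuousAt_const.prodMk ((hasDerivAt_update pt.2 j (pt.2 j)).continuousAt)
      have hmem : (pt.1, Function.update pt.2 j (pt.2 j)) ∈ U := by
        rw [Function.update_eq_self]; exact hpt
      exact hc (hUopen.mem_nhds hmem)
    have heq : (fun z => pdS F j pt.1 (Function.update pt.2 j z))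
        =ᶠ[𝓝 (pt.2 j)] (fun z => fderiv ℂ (fun pt : (Fin n → ℂ) × (Fin m → ℂ) => F pt.1 pt.2)
          (pt.1, Function.update pt.2 j z) (0, Pi.single j 1)) :=
      hnb.mono fun z hz => heS _ hz j
    calc pdS (pdS F j) j pt.1 pt.2
        = deriv (fun z => pdS F j pt.1 (Function.update pt.2 j z)) (pt.2 j) := rfl
      _ = deriv (fun z => fderiv ℂ (fun pt : (Fin n → ℂ) × (Fin m → ℂ) => F pt.1 pt.2)
            (pt.1, Function.update pt.2 j z) (0, Pi.single j 1)) (pt.2 j) := heq.deriv_eq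
      _ = _ := deriv_slice_snd _ pt.1 pt.2 j (((hD1Sa j) pt hpt).differentiableAt)
  -- the base point
  have hP0U : ((extF hp t', extF hq s') : (Fin n → ℂ) × (Fin m → ℂ)) ∈ U := by
    constructor
    · intro i
      by_cases h : (i : ℕ) < p
      · simpa [extF, h] using ht'r ⟨(i : ℕ), h⟩
      · simpa [extF, h] using hr
    · intro j
      by_cases h : (j : ℕ) < q
      · simpa [extF, h] using hs'r ⟨(j : ℕ), h⟩
      · simpa [extF, h] using hr
  -- a positive lower bound δ
  obtain ⟨δ, hδ0, hδr, hδt, hδs⟩ : ∃ δ : ℝ, 0 < δ ∧ δ ≤ r ∧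
      (∀ i, δ ≤ ‖t' i‖) ∧ (∀ j, δ ≤ ‖s' j‖) := by
    set Sf : Finset ℝ := insert r ((Finset.univ.image fun i => ‖t' i‖)
      ∪ (Finset.univ.image fun j => ‖s' j‖)) with hSf
    have hne : Sf.Nonempty := ⟨r, by simp [hSf]⟩
    refine ⟨Sf.min' hne, ?_, ?_, ?_, ?_⟩
    · rw [Finset.lt_min'_iff]
      intro x hx
      simp only [hSf, Finset.mem_insert, Finset.mem_union, Finset.mem_image, Finset.mem_univ,
        true_and] at hx
      rcases hx with rfl | ⟨i, rfl⟩ | ⟨j, rfl⟩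
      · exact hr
      · exact norm_pos_iff.2 (ht'0 i)
      · exact norm_pos_iff.2 (hs'0 j)
    · exact Finset.min'_le _ _ (by simp [hSf])
    · intro i; exact Finset.min'_le _ _ (by simp only [hSf, Finset.mem_insert, Finset.mem_union,
        Finset.mem_image, Finset.mem_univ, true_and]; exact Or.inr (Or.inl ⟨i, rfl⟩))
    · intro j; exact Finset.min'_le _ _ (by simp only [hSf, Finset.mem_insert, Finset.mem_union,
        Finset.mem_image, Finset.mem_univ, true_and]; exact Or.inr (Or.inr ⟨j, rfl⟩))
  -- the perturbed path
  set P : ℂ → (Fin n → ℂ) × (Fin m → ℂ) := fun ε =>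
    (fun i => if h : (i : ℕ) < p then t' ⟨(i : ℕ), h⟩ else ε * ((((i : ℕ) + 1 : ℕ) : ℂ)),
     fun j => if h : (j : ℕ) < q then s' ⟨(j : ℕ), h⟩ else ε * (((n + (j : ℕ) + 1 : ℕ) : ℂ)))
    with hPdef
  have hP0eq : P 0 = (extF hp t', extF hq s') := by
    rw [hPdef]
    refine Prod.ext ?_ ?_
    · funext k; by_cases h : (k : ℕ) < p <;> simp [extF, h]
    · funext k; by_cases h : (k : ℕ) < q <;> simp [extF, h]
  have hPcont : ContinuousAt P 0 := by
    rw [hPdef]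
    refine ContinuousAt.prodMk ?_ ?_ <;> rw [continuousAt_pi]
    · intro k
      by_cases h : (k : ℕ) < p
      · simp only [dif_pos h]; exact continuousAt_const
      · simp only [dif_neg h]; exact continuousAt_id.mul continuousAt_const
    · intro k
      by_cases h : (k : ℕ) < q
      · simp only [dif_pos h]; exact continuousAt_const
      · simp only [dif_neg h]; exact continuousAt_id.mul continuousAt_const
  have hPt : Tendsto P (𝓝[≠] (0 : ℂ)) (𝓝 ((extF hp t', extF hq s') :
      (Fin n → ℂ) × (Fin m → ℂ))) := by
    have h1 := hPcont.tendsto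
    rw [hP0eq] at h1
    exact h1.mono_left nhdsWithin_le_nhds
  -- smallness of the perturbation, eventually
  have hsmall : ∀ᶠ ε in 𝓝 (0 : ℂ), ‖ε‖ * ((n + m + 1 : ℕ) : ℝ) < δ := by
    have hc : Tendsto (fun ε : ℂ => ‖ε‖ * ((n + m + 1 : ℕ) : ℝ)) (𝓝 0)
        (𝓝 (‖(0:ℂ)‖ * ((n + m + 1 : ℕ) : ℝ))) :=
      ((continuous_norm.tendsto 0).mul tendsto_const_nhds)
    simp only [map_zero, norm_zero, zero_mul] at hc
    exact hc.eventually_lt_const hδ0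
  -- goodness of the perturbed points, eventually
  have hgood : ∀ᶠ ε in 𝓝[≠] (0 : ℂ), P ε ∈ U ∧ DeformedSystemAt n m α a b c F (P ε).1 (P ε).2 := by
    filter_upwards [hsmall.filter_mono nhdsWithin_le_nhds, self_mem_nhdsWithin] with ε hε hε0'
    have hε0 : ε ≠ 0 := hε0'
    have habs : ∀ N : ℕ, N ≤ n + m + 1 → ‖ε * (N : ℂ)‖ < δ := by
      intro N hN
      rw [norm_mul, Complex.norm_natCast]
      calc ‖ε‖ * (N : ℝ) ≤ ‖ε‖ * ((n + m + 1 : ℕ) : ℝ) := by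
            apply mul_le_mul_of_nonneg_left _ (norm_nonneg _)
            exact_mod_cast hN
        _ < δ := hε
    have habs' : ∀ N : ℕ, N ≤ n + m + 1 → ∀ x : ℂ, δ ≤ ‖x‖ → x ≠ ε * (N : ℂ) :=
      fun N hN x hx heq => absurd (le_trans hx (le_of_eq (by rw [heq]))) (not_le.2 (habs N hN))
    have h1r : ∀ i : Fin n, ‖(P ε).1 i‖ < r := by
      intro i
      by_cases h : (i : ℕ) < p
      · simpa [hPdef, h] using ht'r ⟨(i : ℕ), h⟩
      · simp only [hPdef, dif_neg h]
        exact lt_of_lt_of_le (habs ((i : ℕ) + 1) (by omega)) hδr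
    have h2r : ∀ j : Fin m, ‖(P ε).2 j‖ < r := by
      intro j
      by_cases h : (j : ℕ) < q
      · simpa [hPdef, h] using hs'r ⟨(j : ℕ), h⟩
      · simp only [hPdef, dif_neg h]
        exact lt_of_lt_of_le (habs (n + (j : ℕ) + 1) (by omega)) hδr
    have hinjT : Function.Injective (P ε).1 := by
      intro x y hxy
      simp only [hPdef] at hxy
      by_cases hx : (x : ℕ) < p <;> by_cases hy : (y : ℕ) < p
      · rw [dif_pos hx, dif_pos hy] at hxy
        have := ht' hxy
        apply Fin.ext; simpa [Fin.ext_iff] using this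
      · rw [dif_pos hx, dif_neg hy] at hxy
        exact absurd hxy (habs' _ (by omega) _ (hδt _))
      · rw [dif_neg hx, dif_pos hy] at hxy
        exact absurd hxy.symm (habs' _ (by omega) _ (hδt _))
      · rw [dif_neg hx, dif_neg hy] at hxy
        have h2 := mul_left_cancel₀ hε0 hxy
        have h3 : (x : ℕ) + 1 = (y : ℕ) + 1 := by exact_mod_cast h2
        apply Fin.ext; omega
    have hinjS : Function.Injective (P ε).2 := by
      intro x y hxy
      simp only [hPdef] at hxy
      by_cases hx : (x : ℕ) < q <;> by_cases hy : (y : ℕ) < q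
      · rw [dif_pos hx, dif_pos hy] at hxy
        have := hs' hxy
        apply Fin.ext; simpa [Fin.ext_iff] using this
      · rw [dif_pos hx, dif_neg hy] at hxy
        exact absurd hxy (habs' _ (by omega) _ (hδs _))
      · rw [dif_neg hx, dif_pos hy] at hxy
        exact absurd hxy.symm (habs' _ (by omega) _ (hδs _))
      · rw [dif_neg hx, dif_neg hy] at hxy
        have h2 := mul_left_cancel₀ hε0 hxy
        have h3 : n + (x : ℕ) + 1 = n + (y : ℕ) + 1 := by exact_mod_cast h2
        apply Fin.ext; omega
    have hcross : ∀ (x : Fin n) (y : Fin m), (P ε).1 x ≠ (P ε).2 y := by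
      intro x y hxy
      simp only [hPdef] at hxy
      by_cases hx : (x : ℕ) < p <;> by_cases hy : (y : ℕ) < q
      · rw [dif_pos hx, dif_pos hy] at hxy
        exact hts _ _ hxy
      · rw [dif_pos hx, dif_neg hy] at hxy
        exact absurd hxy (habs' _ (by omega) _ (hδt _))
      · rw [dif_neg hx, dif_pos hy] at hxy
        exact absurd hxy.symm (habs' _ (by omega) _ (hδs _))
      · rw [dif_neg hx, dif_neg hy] at hxy
        have h2 := mul_left_cancel₀ hε0 hxy
        have h3 : (x : ℕ) + 1 = n + (y : ℕ) + 1 := by exact_mod_cast h2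
        omega
    exact ⟨⟨h1r, h2r⟩, hFsys _ _ h1r h2r hinjT hinjS hcross⟩
  have hmemU : ∀ᶠ ε in 𝓝[≠] (0 : ℂ), P ε ∈ U := hgood.mono fun ε h => h.1
  have hsysε : ∀ᶠ ε in 𝓝[≠] (0 : ℂ), DeformedSystemAt n m α a b c F (P ε).1 (P ε).2 :=
    hgood.mono fun ε h => h.2
  -- limit statements for the atoms
  have htF : Tendsto (fun ε => F (P ε).1 (P ε).2) (𝓝[≠] (0 : ℂ))
      (𝓝 (F (extF hp t') (extF hq s'))) :=
    ((hGa _ hP0U).continuousAt.tendsto.comp hPt)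
  have htT1 : ∀ k : Fin n, Tendsto (fun ε => pdT F k (P ε).1 (P ε).2) (𝓝[≠] (0 : ℂ))
      (𝓝 (pdT F k (extF hp t') (extF hq s'))) := by
    intro k
    have hc : Tendsto (fun ε => fderiv ℂ (fun pt : (Fin n → ℂ) × (Fin m → ℂ) => F pt.1 pt.2)
        (P ε) ((Pi.single k 1 : Fin n → ℂ), (0 : Fin m → ℂ))) (𝓝[≠] (0 : ℂ))
        (𝓝 (fderiv ℂ (fun pt : (Fin n → ℂ) × (Fin m → ℂ) => F pt.1 pt.2)
          (extF hp t', extF hq s') (Pi.single k 1, 0))) :=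
      (((hD1Ta k) _ hP0U).continuousAt.tendsto.comp hPt)
    rw [heT _ hP0U k]
    exact hc.congr' (hmemU.mono fun ε hε => (heT _ hε k).symm)
  have htS1 : ∀ k : Fin m, Tendsto (fun ε => pdS F k (P ε).1 (P ε).2) (𝓝[≠] (0 : ℂ))
      (𝓝 (pdS F k (extF hp t') (extF hq s'))) := by
    intro k
    have hc : Tendsto (fun ε => fderiv ℂ (fun pt : (Fin n → ℂ) × (Fin m → ℂ) => F pt.1 pt.2)
        (P ε) ((0 : Fin n → ℂ), (Pi.single k 1 : Fin m → ℂ))) (𝓝[≠] (0 : ℂ))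
        (𝓝 (fderiv ℂ (fun pt : (Fin n → ℂ) × (Fin m → ℂ) => F pt.1 pt.2)
          (extF hp t', extF hq s') (0, Pi.single k 1))) :=
      (((hD1Sa k) _ hP0U).continuousAt.tendsto.comp hPt)
    rw [heS _ hP0U k]
    exact hc.congr' (hmemU.mono fun ε hε => (heS _ hε k).symm)
  have htT2 : ∀ k : Fin n, Tendsto (fun ε => pdT (pdT F k) k (P ε).1 (P ε).2) (𝓝[≠] (0 : ℂ))
      (𝓝 (pdT (pdT F k) k (extF hp t') (extF hq s'))) := by
    intro k
    have hc : Tendsto (fun ε => fderiv ℂ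
        (fun pt => fderiv ℂ (fun pt : (Fin n → ℂ) × (Fin m → ℂ) => F pt.1 pt.2) pt
          ((Pi.single k 1 : Fin n → ℂ), (0 : Fin m → ℂ)))
        (P ε) ((Pi.single k 1 : Fin n → ℂ), (0 : Fin m → ℂ))) (𝓝[≠] (0 : ℂ))
        (𝓝 (fderiv ℂ (fun pt => fderiv ℂ (fun pt : (Fin n → ℂ) × (Fin m → ℂ) => F pt.1 pt.2) pt
          ((Pi.single k 1 : Fin n → ℂ), (0 : Fin m → ℂ)))
          (extF hp t', extF hq s') (Pi.single k 1, 0))) :=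
      (((hD2Ta k) _ hP0U).continuousAt.tendsto.comp hPt)
    rw [heT2 _ hP0U k]
    exact hc.congr' (hmemU.mono fun ε hε => (heT2 _ hε k).symm)
  have htS2 : ∀ k : Fin m, Tendsto (fun ε => pdS (pdS F k) k (P ε).1 (P ε).2) (𝓝[≠] (0 : ℂ))
      (𝓝 (pdS (pdS F k) k (extF hp t') (extF hq s'))) := by
    intro k
    have hc : Tendsto (fun ε => fderiv ℂ
        (fun pt => fderiv ℂ (fun pt : (Fin n → ℂ) × (Fin m → ℂ) => F pt.1 pt.2) pt
          ((0 : Fin n → ℂ), (Pi.single k 1 : Fin m → ℂ)))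
        (P ε) ((0 : Fin n → ℂ), (Pi.single k 1 : Fin m → ℂ))) (𝓝[≠] (0 : ℂ))
        (𝓝 (fderiv ℂ (fun pt => fderiv ℂ (fun pt : (Fin n → ℂ) × (Fin m → ℂ) => F pt.1 pt.2) pt
          ((0 : Fin n → ℂ), (Pi.single k 1 : Fin m → ℂ)))
          (extF hp t', extF hq s') (0, Pi.single k 1))) :=
      (((hD2Sa k) _ hP0U).continuousAt.tendsto.comp hPt)
    rw [heS2 _ hP0U k]
    exact hc.congr' (hmemU.mono fun ε hε => (heS2 _ hε k).symm)
  have htc : ∀ k : Fin n, Tendsto (fun ε => (P ε).1 k) (𝓝[≠] (0 : ℂ)) (𝓝 (extF hp t' k)) :=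
    fun k => (((continuous_apply k).comp continuous_fst).continuousAt.tendsto.comp hPt)
  have hsc : ∀ k : Fin m, Tendsto (fun ε => (P ε).2 k) (𝓝[≠] (0 : ℂ)) (𝓝 (extF hq s' k)) :=
    fun k => (((continuous_apply k).comp continuous_snd).continuousAt.tendsto.comp hPt)
  -- now prove the two families of equations
  refine ⟨fun i => ?_, fun j => ?_⟩
  · -- t-equations
    set I : Fin n := ⟨(i : ℕ), lt_of_lt_of_le i.isLt hp⟩ with hIdef
    have hT0I : extF hp t' I = t' i := extF_apply hp t' i
    have hTne : ∀ k : Fin n, k ≠ I → extF hp t' I - extF hp t' k ≠ 0 := by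
      intro k hk
      rw [sub_ne_zero, hT0I]
      by_cases h : (k : ℕ) < p
      · rw [show extF hp t' k = t' ⟨(k : ℕ), h⟩ by simp [extF, h]]
        intro he
        apply hk
        have := ht' he
        apply Fin.ext; simpa [Fin.ext_iff, hIdef] using this.symm
      · rw [extF_apply_zero hp t' k h]; exact ht'0 i
    have hSne : ∀ k : Fin m, extF hp t' I - extF hq s' k ≠ 0 := by
      intro k
      rw [sub_ne_zero, hT0I]
      by_cases h : (k : ℕ) < q
      · rw [show extF hq s' k = s' ⟨(k : ℕ), h⟩ by simp [extF, h]]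
        exact hts _ _
      · rw [extF_apply_zero hq s' k h]; exact ht'0 i
    have hLim : Tendsto (fun ε =>
        (P ε).1 I * (1 - (P ε).1 I) * pdT (pdT F I) I (P ε).1 (P ε).2
          + (c - (a + b + 1) * (P ε).1 I) * pdT F I (P ε).1 (P ε).2
          - a * b * F (P ε).1 (P ε).2
          + (1 / (α : ℂ)) * ∑ k ∈ univ.filter (fun k => k ≠ I),
              (P ε).1 k / ((P ε).1 I - (P ε).1 k) *
                ((1 - (P ε).1 I) * pdT F I (P ε).1 (P ε).2
                  - (1 - (P ε).1 k) * pdT F k (P ε).1 (P ε).2)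
          - ∑ k : Fin m, (P ε).2 k / ((P ε).1 I - (P ε).2 k) *
              ((1 - (P ε).1 I) * pdT F I (P ε).1 (P ε).2
                + (1 / (α : ℂ)) * (1 - (P ε).2 k) * pdS F k (P ε).1 (P ε).2))
        (𝓝[≠] (0 : ℂ))
        (𝓝 (extF hp t' I * (1 - extF hp t' I) * pdT (pdT F I) I (extF hp t') (extF hq s')
          + (c - (a + b + 1) * extF hp t' I) * pdT F I (extF hp t') (extF hq s')
          - a * b * F (extF hp t') (extF hq s')
          + (1 / (α : ℂ)) * ∑ k ∈ univ.filter (fun k => k ≠ I),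
              extF hp t' k / (extF hp t' I - extF hp t' k) *
                ((1 - extF hp t' I) * pdT F I (extF hp t') (extF hq s')
                  - (1 - extF hp t' k) * pdT F k (extF hp t') (extF hq s'))
          - ∑ k : Fin m, extF hq s' k / (extF hp t' I - extF hq s' k) *
              ((1 - extF hp t' I) * pdT F I (extF hp t') (extF hq s')
                + (1 / (α : ℂ)) * (1 - extF hq s' k) * pdS F k (extF hp t') (extF hq s')))) := by
      refine Filter.Tendsto.sub (Filter.Tendsto.add (Filter.Tendsto.sub
        (Filter.Tendsto.add ?_ ?_) ?_) ?_) ?_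
      · exact ((htc I).mul (tendsto_const_nhds.sub (htc I))).mul (htT2 I)
      · exact (tendsto_const_nhds.sub (tendsto_const_nhds.mul (htc I))).mul (htT1 I)
      · exact tendsto_const_nhds.mul htF
      · refine tendsto_const_nhds.mul (tendsto_finset_sum _ fun k hk => ?_)
        have hk' : k ≠ I := by simpa using hk
        exact ((htc k).div ((htc I).sub (htc k)) (hTne k hk')).mul
          (((tendsto_const_nhds.sub (htc I)).mul (htT1 I)).sub
            ((tendsto_const_nhds.sub (htc k)).mul (htT1 k)))
      · refine tendsto_finset_sum _ fun k _ => ?_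
        exact ((hsc k).div ((htc I).sub (hsc k)) (hSne k)).mul
          (((tendsto_const_nhds.sub (htc I)).mul (htT1 I)).add
            ((tendsto_const_nhds.mul (tendsto_const_nhds.sub (hsc k))).mul (htS1 k)))
    have hZero : Tendsto (fun ε =>
        (P ε).1 I * (1 - (P ε).1 I) * pdT (pdT F I) I (P ε).1 (P ε).2
          + (c - (a + b + 1) * (P ε).1 I) * pdT F I (P ε).1 (P ε).2
          - a * b * F (P ε).1 (P ε).2
          + (1 / (α : ℂ)) * ∑ k ∈ univ.filter (fun k => k ≠ I),
              (P ε).1 k / ((P ε).1 I - (P ε).1 k) *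
                ((1 - (P ε).1 I) * pdT F I (P ε).1 (P ε).2
                  - (1 - (P ε).1 k) * pdT F k (P ε).1 (P ε).2)
          - ∑ k : Fin m, (P ε).2 k / ((P ε).1 I - (P ε).2 k) *
              ((1 - (P ε).1 I) * pdT F I (P ε).1 (P ε).2
                + (1 / (α : ℂ)) * (1 - (P ε).2 k) * pdS F k (P ε).1 (P ε).2))
        (𝓝[≠] (0 : ℂ)) (𝓝 0) :=
      tendsto_const_nhds.congr' (hsysε.mono fun ε hε => ((hε.1 I)).symm)
    have hfull := tendsto_nhds_unique hLim hZero
    -- now identify the limit with the restricted equation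
    have hsum1 : ∑ k ∈ univ.filter (fun k => k ≠ I),
        extF hp t' k / (extF hp t' I - extF hp t' k) *
          ((1 - extF hp t' I) * pdT F I (extF hp t') (extF hq s')
            - (1 - extF hp t' k) * pdT F k (extF hp t') (extF hq s'))
        = ∑ k ∈ univ.filter (fun k => k ≠ i),
            t' k / (t' i - t' k) *
              ((1 - t' i) * pdT (fun u v => F (extF hp u) (extF hq v)) i t' s'
                - (1 - t' k) * pdT (fun u v => F (extF hp u) (extF hq v)) k t' s') := by
      refine sum_restrict_filter hp _ _ ?_ ?_ i
      · intro k
        rw [extF_apply hp t' k, hT0I, pdT_ext hp hq F i t' s', pdT_ext hp hq F k t' s']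
      · intro k hk
        rw [extF_apply_zero hp t' k hk, zero_div, zero_mul]
    have hsum2 : ∑ k : Fin m, extF hq s' k / (extF hp t' I - extF hq s' k) *
          ((1 - extF hp t' I) * pdT F I (extF hp t') (extF hq s')
            + (1 / (α : ℂ)) * (1 - extF hq s' k) * pdS F k (extF hp t') (extF hq s'))
        = ∑ k : Fin q, s' k / (t' i - s' k) *
            ((1 - t' i) * pdT (fun u v => F (extF hp u) (extF hq v)) i t' s'
              + (1 / (α : ℂ)) * (1 - s' k) * pdS (fun u v => F (extF hp u) (extF hq v)) k t' s') := by
      refine sum_restrict_univ hq _ _ ?_ ?_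
      · intro k
        rw [extF_apply hq s' k, hT0I, pdT_ext hp hq F i t' s', pdS_ext hp hq F k t' s']
      · intro k hk
        rw [extF_apply_zero hq s' k hk, zero_div, zero_mul]
    rw [hsum1, hsum2, hT0I, hIdef] at hfull
    rw [← pdT_ext hp hq F i t' s', ← pdT2_ext hp hq F i t' s'] at hfull
    exact hfull
  · -- s-equations
    set J : Fin m := ⟨(j : ℕ), lt_of_lt_of_le j.isLt hq⟩ with hJdef
    have hS0J : extF hq s' J = s' j := extF_apply hq s' j
    have hSne : ∀ k : Fin m, k ≠ J → extF hq s' J - extF hq s' k ≠ 0 := by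
      intro k hk
      rw [sub_ne_zero, hS0J]
      by_cases h : (k : ℕ) < q
      · rw [show extF hq s' k = s' ⟨(k : ℕ), h⟩ by simp [extF, h]]
        intro he
        apply hk
        have := hs' he
        apply Fin.ext; simpa [Fin.ext_iff, hJdef] using this.symm
      · rw [extF_apply_zero hq s' k h]; exact hs'0 j
    have hTne : ∀ k : Fin n, extF hq s' J - extF hp t' k ≠ 0 := by
      intro k
      rw [sub_ne_zero, hS0J]
      by_cases h : (k : ℕ) < p
      · rw [show extF hp t' k = t' ⟨(k : ℕ), h⟩ by simp [extF, h]]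
        exact fun he => hts _ _ he.symm
      · rw [extF_apply_zero hp t' k h]; exact hs'0 j
    have hLim : Tendsto (fun ε =>
        -(1 / (α : ℂ)) * (P ε).2 J * (1 - (P ε).2 J) * pdS (pdS F J) J (P ε).1 (P ε).2
          + (c - (a + b + 1 - (1 + 1 / (α : ℂ))) * (P ε).2 J) * pdS F J (P ε).1 (P ε).2
          + (α : ℂ) * a * b * F (P ε).1 (P ε).2
          - ∑ k ∈ univ.filter (fun k => k ≠ J),
              (P ε).2 k / ((P ε).2 J - (P ε).2 k) *
                ((1 - (P ε).2 J) * pdS F J (P ε).1 (P ε).2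
                  - (1 - (P ε).2 k) * pdS F k (P ε).1 (P ε).2)
          + ∑ k : Fin n, (P ε).1 k / ((P ε).2 J - (P ε).1 k) *
              ((1 / (α : ℂ)) * (1 - (P ε).2 J) * pdS F J (P ε).1 (P ε).2
                + (1 - (P ε).1 k) * pdT F k (P ε).1 (P ε).2))
        (𝓝[≠] (0 : ℂ))
        (𝓝 (-(1 / (α : ℂ)) * extF hq s' J * (1 - extF hq s' J) *
            pdS (pdS F J) J (extF hp t') (extF hq s')
          + (c - (a + b + 1 - (1 + 1 / (α : ℂ))) * extF hq s' J) *
            pdS F J (extF hp t') (extF hq s')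
          + (α : ℂ) * a * b * F (extF hp t') (extF hq s')
          - ∑ k ∈ univ.filter (fun k => k ≠ J),
              extF hq s' k / (extF hq s' J - extF hq s' k) *
                ((1 - extF hq s' J) * pdS F J (extF hp t') (extF hq s')
                  - (1 - extF hq s' k) * pdS F k (extF hp t') (extF hq s'))
          + ∑ k : Fin n, extF hp t' k / (extF hq s' J - extF hp t' k) *
              ((1 / (α : ℂ)) * (1 - extF hq s' J) * pdS F J (extF hp t') (extF hq s')
                + (1 - extF hp t' k) * pdT F k (extF hp t') (extF hq s')))) := by
      refine Filter.Tendsto.add (Filter.Tendsto.sub (Filter.Tendsto.add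
        (Filter.Tendsto.add ?_ ?_) ?_) ?_) ?_
      · exact ((tendsto_const_nhds.mul (hsc J)).mul (tendsto_const_nhds.sub (hsc J))).mul (htS2 J)
      · exact (tendsto_const_nhds.sub (tendsto_const_nhds.mul (hsc J))).mul (htS1 J)
      · exact tendsto_const_nhds.mul htF
      · refine tendsto_finset_sum _ fun k hk => ?_
        have hk' : k ≠ J := by simpa using hk
        exact ((hsc k).div ((hsc J).sub (hsc k)) (hSne k hk')).mul
          (((tendsto_const_nhds.sub (hsc J)).mul (htS1 J)).sub
            ((tendsto_const_nhds.sub (hsc k)).mul (htS1 k)))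
      · refine tendsto_finset_sum _ fun k _ => ?_
        exact ((htc k).div ((hsc J).sub (htc k)) (hTne k)).mul
          (((tendsto_const_nhds.mul (tendsto_const_nhds.sub (hsc J))).mul (htS1 J)).add
            ((tendsto_const_nhds.sub (htc k)).mul (htT1 k)))
    have hZero : Tendsto (fun ε =>
        -(1 / (α : ℂ)) * (P ε).2 J * (1 - (P ε).2 J) * pdS (pdS F J) J (P ε).1 (P ε).2
          + (c - (a + b + 1 - (1 + 1 / (α : ℂ))) * (P ε).2 J) * pdS F J (P ε).1 (P ε).2
          + (α : ℂ) * a * b * F (P ε).1 (P ε).2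
          - ∑ k ∈ univ.filter (fun k => k ≠ J),
              (P ε).2 k / ((P ε).2 J - (P ε).2 k) *
                ((1 - (P ε).2 J) * pdS F J (P ε).1 (P ε).2
                  - (1 - (P ε).2 k) * pdS F k (P ε).1 (P ε).2)
          + ∑ k : Fin n, (P ε).1 k / ((P ε).2 J - (P ε).1 k) *
              ((1 / (α : ℂ)) * (1 - (P ε).2 J) * pdS F J (P ε).1 (P ε).2
                + (1 - (P ε).1 k) * pdT F k (P ε).1 (P ε).2))
        (𝓝[≠] (0 : ℂ)) (𝓝 0) :=
      tendsto_const_nhds.congr' (hsysε.mono fun ε hε => ((hε.2 J)).symm)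
    have hfull := tendsto_nhds_unique hLim hZero
    have hsum1 : ∑ k ∈ univ.filter (fun k => k ≠ J),
        extF hq s' k / (extF hq s' J - extF hq s' k) *
          ((1 - extF hq s' J) * pdS F J (extF hp t') (extF hq s')
            - (1 - extF hq s' k) * pdS F k (extF hp t') (extF hq s'))
        = ∑ k ∈ univ.filter (fun k => k ≠ j),
            s' k / (s' j - s' k) *
              ((1 - s' j) * pdS (fun u v => F (extF hp u) (extF hq v)) j t' s'
                - (1 - s' k) * pdS (fun u v => F (extF hp u) (extF hq v)) k t' s') := by
      refine sum_restrict_filter hq _ _ ?_ ?_ j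
      · intro k
        rw [extF_apply hq s' k, hS0J, pdS_ext hp hq F j t' s', pdS_ext hp hq F k t' s']
      · intro k hk
        rw [extF_apply_zero hq s' k hk, zero_div, zero_mul]
    have hsum2 : ∑ k : Fin n, extF hp t' k / (extF hq s' J - extF hp t' k) *
          ((1 / (α : ℂ)) * (1 - extF hq s' J) * pdS F J (extF hp t') (extF hq s')
            + (1 - extF hp t' k) * pdT F k (extF hp t') (extF hq s'))
        = ∑ k : Fin p, t' k / (s' j - t' k) *
            ((1 / (α : ℂ)) * (1 - s' j) * pdS (fun u v => F (extF hp u) (extF hq v)) j t' s'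
              + (1 - t' k) * pdT (fun u v => F (extF hp u) (extF hq v)) k t' s') := by
      refine sum_restrict_univ hp _ _ ?_ ?_
      · intro k
        rw [extF_apply hp t' k, hS0J, pdS_ext hp hq F j t' s', pdT_ext hp hq F k t' s']
      · intro k hk
        rw [extF_apply_zero hp t' k hk, zero_div, zero_mul]
    rw [hsum1, hsum2, hS0J, hJdef] at hfull
    rw [← pdS_ext hp hq F j t' s', ← pdS2_ext hp hq F j t' s'] at hfull
    exact hfull
end
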